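/- arXiv:0910.0793 — 2 statements merged into one kernel-verified Lean document; each statement's English description precedes it below -/
import Mathlib

section
/- Let Δ = Δ_0 + Δ_1 + ⋯ + Δ_k be a Minkowski sum decomposition of a reflexive polytope Δ ⊂ ℝ^d into lattice polytopes. Define ∇̂_0 = Conv({u − Σ_{i=1}^k min⟨Δ_i,u⟩ e_i* : u ∈ Δ*} ∪ {e_1*, …, e_k*}) ⊂ ℝ^d ⊕ ℝ^k and ∇̂_i = ∇̂_0 − e_i* for i = 1,…,k. Then ∇̂_0 + ∇̂_1 + ⋯ + ∇̂_k = (k+1)∇̂_0 + e_0* is a reflexive polytope in ℝ^d ⊕ ℝ^k with respect to the lattice ℤ^d ⊕ ℤ^k, and its dual reflexive polytope is (∇̂_0 + ⋯ + ∇̂_k)* = Conv(Δ_0 + e_0, Δ_1 + e_1, …, Δ_k + e_k). -/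
open scoped Pointwise
open Set

noncomputable section

/-- The standard pairing on `ℝ^n`. -/
def pairing {n : ℕ} (x y : Fin n → ℝ) : ℝ := ∑ i, x i * y i

/-- A point of `ℝ^n` lying in the lattice `ℤ^n`. -/
def IsLatticePt {n : ℕ} (x : Fin n → ℝ) : Prop := ∀ i, ∃ z : ℤ, x i = (z : ℝ)

/-- A lattice polytope: the convex hull of finitely many lattice points. -/
def IsLatticePolytope {n : ℕ} (P : Set (Fin n → ℝ)) : Prop :=
  ∃ S : Set (Fin n → ℝ), S.Finite ∧ (∀ x ∈ S, IsLatticePt x) ∧ P = convexHull ℝ S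

/-- The dual polytope `P* = {y | ⟨x,y⟩ ≥ -1 ∀ x ∈ P}`. -/
def polarDual {n : ℕ} (P : Set (Fin n → ℝ)) : Set (Fin n → ℝ) :=
  {y | ∀ x ∈ P, -1 ≤ pairing x y}

/-- A reflexive polytope. -/
def IsReflexive {n : ℕ} (P : Set (Fin n → ℝ)) : Prop :=
  IsLatticePolytope P ∧ (0 : Fin n → ℝ) ∈ interior P ∧ IsLatticePolytope (polarDual P)

/-- `min⟨P, u⟩ = min_{x ∈ P} ⟨x, u⟩`. -/
def minPair {n : ℕ} (P : Set (Fin n → ℝ)) (u : Fin n → ℝ) : ℝ :=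
  sInf ((fun x => pairing x u) '' P)

/-- The real vector space `ℝ^d ⊕ ℝ^k`. -/
abbrev Vdk (d k : ℕ) := (Fin d → ℝ) × (Fin k → ℝ)

/-- The pairing on `ℝ^d ⊕ ℝ^k` (sum of the two standard pairings). -/
def pairingV {d k : ℕ} (x y : Vdk d k) : ℝ := pairing x.1 y.1 + pairing x.2 y.2

def IsLatticePtV {d k : ℕ} (x : Vdk d k) : Prop := IsLatticePt x.1 ∧ IsLatticePt x.2

def IsLatticePolytopeV {d k : ℕ} (P : Set (Vdk d k)) : Prop :=
  ∃ S : Set (Vdk d k), S.Finite ∧ (∀ x ∈ S, IsLatticePtV x) ∧ P = convexHull ℝ S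

def polarDualV {d k : ℕ} (P : Set (Vdk d k)) : Set (Vdk d k) :=
  {y | ∀ x ∈ P, -1 ≤ pairingV x y}

def IsReflexiveV {d k : ℕ} (P : Set (Vdk d k)) : Prop :=
  IsLatticePolytopeV P ∧ (0 : Vdk d k) ∈ interior P ∧ IsLatticePolytopeV (polarDualV P)

/-- The Cayley cone `σ̄ = {(t₀Δ₀ + ⋯ + t_kΔ_k, t₀, …, t_k) : tᵢ ≥ 0} ⊆ ℝ^d ⊕ ℝ^{k+1}`. -/
def cayleyCone {d k : ℕ} (Δ : Fin (k+1) → Set (Fin d → ℝ)) : Set (Vdk d (k+1)) :=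
  {p | (∀ i, 0 ≤ p.2 i) ∧ p.1 ∈ ∑ i, p.2 i • Δ i}

/-- The dual cone of a cone in `ℝ^d ⊕ ℝ^k`. -/
def dualConeV {d k : ℕ} (σ : Set (Vdk d k)) : Set (Vdk d k) :=
  {y | ∀ x ∈ σ, 0 ≤ pairingV x y}

/-- `e₀ = −(e₁ + ⋯ + e_k)`, `eᵢ` the standard basis of the second factor `ℝ^k`.
(The same coordinate vectors serve as `e₀*, e₁*, …, e_k*` in the dual copy.) -/
def evec {k : ℕ} : Fin (k+1) → Fin k → ℝ :=
  Fin.cases (fun _ => -1) (fun i => Pi.single i 1)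

section AuxiliaryLemmas


lemma pairing_add_left {n : ℕ} (x y z : Fin n → ℝ) :
    pairing (x + y) z = pairing x z + pairing y z := by
  simp [pairing, add_mul, Finset.sum_add_distrib]

lemma pairing_smul_left {n : ℕ} (c : ℝ) (x y : Fin n → ℝ) :
    pairing (c • x) y = c * pairing x y := by
  simp [pairing, Finset.mul_sum, mul_assoc]

lemma pairing_comm {n : ℕ} (x y : Fin n → ℝ) : pairing x y = pairing y x := by
  simp [pairing, mul_comm]

lemma pairing_zero_left {n : ℕ} (y : Fin n → ℝ) : pairing 0 y = 0 := by simp [pairing]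
lemma pairing_zero_right {n : ℕ} (x : Fin n → ℝ) : pairing x 0 = 0 := by simp [pairing]

lemma pairing_smul_right {n : ℕ} (c : ℝ) (x y : Fin n → ℝ) :
    pairing x (c • y) = c * pairing x y := by
  rw [pairing_comm, pairing_smul_left, pairing_comm]

lemma pairing_add_right {n : ℕ} (x y z : Fin n → ℝ) :
    pairing x (y + z) = pairing x y + pairing x z := by
  rw [pairing_comm, pairing_add_left, pairing_comm y x, pairing_comm z x]

def pairLM {n : ℕ} (u : Fin n → ℝ) : (Fin n → ℝ) →ₗ[ℝ] ℝ where
  toFun x := pairing x u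
  map_add' x y := pairing_add_left x y u
  map_smul' c x := by simp [pairing_smul_left c x u]

lemma pairing_sum_left {n : ℕ} {ι : Type*} (t : Finset ι) (g : ι → Fin n → ℝ) (u : Fin n → ℝ) :
    pairing (∑ i ∈ t, g i) u = ∑ i ∈ t, pairing (g i) u :=
  map_sum (pairLM u) g t

lemma pairing_sum_right {n : ℕ} {ι : Type*} (t : Finset ι) (u : Fin n → ℝ) (g : ι → Fin n → ℝ) :
    pairing u (∑ i ∈ t, g i) = ∑ i ∈ t, pairing u (g i) := by
  rw [pairing_comm, pairing_sum_left]
  exact Finset.sum_congr rfl fun i _ => pairing_comm _ _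

lemma pairing_single_left {n : ℕ} (j : Fin n) (z : Fin n → ℝ) :
    pairing (Pi.single j 1) z = z j := by
  simp [pairing, Pi.single_apply, ite_mul]

lemma pairing_single_right {n : ℕ} (j : Fin n) (z : Fin n → ℝ) :
    pairing z (Pi.single j 1) = z j := by
  rw [pairing_comm, pairing_single_left]

lemma pairing_negone_right {n : ℕ} (z : Fin n → ℝ) :
    pairing z (fun _ => -1) = -∑ j, z j := by
  simp [pairing]

lemma pairing_negone_left {n : ℕ} (y : Fin n → ℝ) :
    pairing (fun _ => -1) y = -∑ j, y j := by
  rw [pairing_comm, pairing_negone_right]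

lemma pairing_int {n : ℕ} {x y : Fin n → ℝ} (hx : IsLatticePt x) (hy : IsLatticePt y) :
    ∃ z : ℤ, pairing x y = (z : ℝ) := by
  choose a ha using hx
  choose b hb using hy
  refine ⟨∑ i, a i * b i, ?_⟩
  rw [pairing]
  push_cast
  exact Finset.sum_congr rfl fun i _ => by rw [ha i, hb i]

lemma minPair_spec {n : ℕ} {P : Set (Fin n → ℝ)} {S : Finset (Fin n → ℝ)}
    (hS : S.Nonempty) (hP : P = convexHull ℝ (S : Set (Fin n → ℝ))) (u : Fin n → ℝ) :
    (∃ x ∈ S, minPair P u = pairing x u) ∧ ∀ x ∈ P, minPair P u ≤ pairing x u := by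
  obtain ⟨x₀, hx₀S, hx₀⟩ := S.exists_mem_eq_inf' hS (fun x => pairing x u)
  have hlin : IsLinearMap ℝ (fun x : Fin n → ℝ => pairing x u) := (pairLM u).isLinear
  have hlb : ∀ x ∈ P, pairing x₀ u ≤ pairing x u := by
    intro x hx
    rw [hP] at hx
    refine convexHull_min (fun y hy => ?_) (convex_halfSpace_ge hlin (pairing x₀ u)) hx
    show pairing x₀ u ≤ pairing y u
    rw [← hx₀]
    exact Finset.inf'_le _ (Finset.mem_coe.1 hy)
  have hx₀P : x₀ ∈ P := by rw [hP]; exact subset_convexHull ℝ _ hx₀S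
  have himg : ((fun x => pairing x u) '' P).Nonempty := ⟨_, ⟨x₀, hx₀P, rfl⟩⟩
  have hbdd : BddBelow ((fun x => pairing x u) '' P) :=
    ⟨pairing x₀ u, by rintro _ ⟨x, hx, rfl⟩; exact hlb x hx⟩
  have h1 : minPair P u = pairing x₀ u := by
    refine le_antisymm (csInf_le hbdd ⟨x₀, hx₀P, rfl⟩) (le_csInf himg ?_)
    rintro _ ⟨x, hx, rfl⟩
    exact hlb x hx
  exact ⟨⟨x₀, hx₀S, h1⟩, fun x hx => h1 ▸ hlb x hx⟩

lemma minPair_ge {n : ℕ} {P : Set (Fin n → ℝ)} {S : Finset (Fin n → ℝ)}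
    (hS : S.Nonempty) (hP : P = convexHull ℝ (S : Set (Fin n → ℝ))) {u : Fin n → ℝ} {c : ℝ}
    (hc : ∀ x ∈ P, c ≤ pairing x u) : c ≤ minPair P u := by
  obtain ⟨⟨x₀, hx₀S, h⟩, -⟩ := minPair_spec hS hP u
  rw [h]
  exact hc x₀ (by rw [hP]; exact subset_convexHull ℝ _ hx₀S)

lemma minPair_zero {n : ℕ} {P : Set (Fin n → ℝ)} {S : Finset (Fin n → ℝ)}
    (hS : S.Nonempty) (hP : P = convexHull ℝ (S : Set (Fin n → ℝ))) : minPair P 0 = 0 := by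
  obtain ⟨⟨x₀, -, h⟩, -⟩ := minPair_spec hS hP 0
  rw [h, pairing_zero_right]

lemma minPair_smul {n : ℕ} {P : Set (Fin n → ℝ)} {S : Finset (Fin n → ℝ)}
    (hS : S.Nonempty) (hP : P = convexHull ℝ (S : Set (Fin n → ℝ))) {c : ℝ} (hc : 0 ≤ c)
    (u : Fin n → ℝ) : minPair P (c • u) = c * minPair P u := by
  obtain ⟨⟨x₀, hx₀S, h⟩, -⟩ := minPair_spec hS hP u
  have hx₀P : x₀ ∈ P := by rw [hP]; exact subset_convexHull ℝ _ hx₀S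
  refine le_antisymm ?_ (minPair_ge hS hP fun x hx => ?_)
  · calc minPair P (c • u) ≤ pairing x₀ (c • u) := (minPair_spec hS hP (c • u)).2 x₀ hx₀P
      _ = c * pairing x₀ u := pairing_smul_right c x₀ u
      _ = c * minPair P u := by rw [h]
  · rw [pairing_smul_right]
    exact mul_le_mul_of_nonneg_left ((minPair_spec hS hP u).2 x hx) hc

lemma minPair_combo {n : ℕ} {P : Set (Fin n → ℝ)} {S : Finset (Fin n → ℝ)}
    (hS : S.Nonempty) (hP : P = convexHull ℝ (S : Set (Fin n → ℝ)))
    {ι : Type*} (t : Finset ι) (w : ι → ℝ) (z : ι → Fin n → ℝ) (hw : ∀ i ∈ t, 0 ≤ w i) :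
    ∑ i ∈ t, w i * minPair P (z i) ≤ minPair P (∑ i ∈ t, w i • z i) := by
  obtain ⟨⟨x₀, hx₀S, h⟩, -⟩ := minPair_spec hS hP (∑ i ∈ t, w i • z i)
  have hx₀P : x₀ ∈ P := by rw [hP]; exact subset_convexHull ℝ _ hx₀S
  rw [h, pairing_sum_right]
  refine Finset.sum_le_sum fun i hi => ?_
  rw [pairing_smul_right]
  exact mul_le_mul_of_nonneg_left ((minPair_spec hS hP (z i)).2 x₀ hx₀P) (hw i hi)

lemma minPair_concave2 {n : ℕ} {P : Set (Fin n → ℝ)} {S : Finset (Fin n → ℝ)}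
    (hS : S.Nonempty) (hP : P = convexHull ℝ (S : Set (Fin n → ℝ)))
    {a b : ℝ} (ha : 0 ≤ a) (hb : 0 ≤ b) (u u' : Fin n → ℝ) :
    a * minPair P u + b * minPair P u' ≤ minPair P (a • u + b • u') := by
  obtain ⟨⟨x₀, hx₀S, h⟩, -⟩ := minPair_spec hS hP (a • u + b • u')
  have hx₀P : x₀ ∈ P := by rw [hP]; exact subset_convexHull ℝ _ hx₀S
  rw [h, pairing_add_right, pairing_smul_right, pairing_smul_right]
  have h1 := mul_le_mul_of_nonneg_left ((minPair_spec hS hP u).2 x₀ hx₀P) ha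
  have h2 := mul_le_mul_of_nonneg_left ((minPair_spec hS hP u').2 x₀ hx₀P) hb
  linarith

lemma minPair_int {n : ℕ} {P : Set (Fin n → ℝ)} {S : Finset (Fin n → ℝ)}
    (hS : S.Nonempty) (hP : P = convexHull ℝ (S : Set (Fin n → ℝ)))
    (hlat : ∀ x ∈ S, IsLatticePt x) {u : Fin n → ℝ} (hu : IsLatticePt u) :
    ∃ z : ℤ, minPair P u = (z : ℝ) := by
  obtain ⟨⟨x₀, hx₀S, h⟩, -⟩ := minPair_spec hS hP u
  obtain ⟨z, hz⟩ := pairing_int (hlat x₀ hx₀S) hu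
  exact ⟨z, by rw [h, hz]⟩

-- Vdk-side pairing lemmas
lemma pairingV_comm {d k : ℕ} (x y : Vdk d k) : pairingV x y = pairingV y x := by
  rw [pairingV, pairingV, pairing_comm, pairing_comm x.2 y.2]

lemma pairingV_add_left {d k : ℕ} (x y z : Vdk d k) :
    pairingV (x + y) z = pairingV x z + pairingV y z := by
  show pairing (x.1 + y.1) z.1 + pairing (x.2 + y.2) z.2 = _
  rw [pairing_add_left, pairing_add_left, pairingV, pairingV]; ring

lemma pairingV_smul_left {d k : ℕ} (c : ℝ) (x y : Vdk d k) :
    pairingV (c • x) y = c * pairingV x y := by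
  show pairing (c • x.1) y.1 + pairing (c • x.2) y.2 = _
  rw [pairing_smul_left, pairing_smul_left, pairingV]; ring

lemma pairingV_add_right {d k : ℕ} (x y z : Vdk d k) :
    pairingV x (y + z) = pairingV x y + pairingV x z := by
  rw [pairingV_comm, pairingV_add_left, pairingV_comm y x, pairingV_comm z x]

lemma pairingV_smul_right {d k : ℕ} (c : ℝ) (x y : Vdk d k) :
    pairingV x (c • y) = c * pairingV x y := by
  rw [pairingV_comm, pairingV_smul_left, pairingV_comm]

lemma convex_polarDualV {d k : ℕ} (A : Set (Vdk d k)) : Convex ℝ (polarDualV A) := by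
  intro y1 h1 y2 h2 a b ha hb hab x hx
  have e : pairingV x (a • y1 + b • y2) = a * pairingV x y1 + b * pairingV x y2 := by
    rw [pairingV_add_right, pairingV_smul_right, pairingV_smul_right]
  rw [e]
  have t1 := mul_le_mul_of_nonneg_left (h1 x hx) ha
  have t2 := mul_le_mul_of_nonneg_left (h2 x hx) hb
  nlinarith

lemma convexHull_iUnion_convexHull {E : Type*} [AddCommGroup E] [Module ℝ E] {ι : Sort*}
    (A : ι → Set E) :
    convexHull ℝ (⋃ i, convexHull ℝ (A i)) = convexHull ℝ (⋃ i, A i) := by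
  refine le_antisymm ?_ (convexHull_mono (Set.iUnion_mono fun i => subset_convexHull ℝ (A i)))
  refine convexHull_min (Set.iUnion_subset fun i => ?_) (convex_convexHull ℝ _)
  exact convexHull_mono (Set.subset_iUnion A i)

lemma sum_singleton_sets {E : Type*} [AddCommMonoid E] {ι : Type*} (t : Finset ι) (x : ι → E) :
    ∑ i ∈ t, ({x i} : Set E) = {∑ i ∈ t, x i} := by
  classical
  induction t using Finset.cons_induction with
  | empty => simp only [Finset.sum_empty]; exact Set.singleton_zero.symm
  | cons a t ha ih => rw [Finset.sum_cons, Finset.sum_cons, ih, Set.singleton_add_singleton]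

lemma nsmul_set_eq_smul_real {E : Type*} [AddCommGroup E] [Module ℝ E] {Q : Set E}
    (hQ : Convex ℝ Q) : ∀ n : ℕ, (n + 1) • Q = ((n : ℝ) + 1) • Q
  | 0 => by simp
  | (n + 1) => by
    have h2 : ((n + 1 : ℕ) : ℝ) + 1 = ((n : ℝ) + 1) + 1 := by push_cast; ring
    calc (n + 1 + 1) • Q = (n + 1) • Q + Q := succ_nsmul Q (n + 1)
      _ = ((n : ℝ) + 1) • Q + (1 : ℝ) • Q := by
          rw [nsmul_set_eq_smul_real hQ n, one_smul]
      _ = (((n : ℝ) + 1) + 1) • Q := (hQ.add_smul (by positivity) zero_le_one).symm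
      _ = (((n + 1 : ℕ) : ℝ) + 1) • Q := by rw [h2]

lemma latticePt_zero {n : ℕ} : IsLatticePt (0 : Fin n → ℝ) := fun _ => ⟨0, by simp⟩

lemma latticePt_single {n : ℕ} (j : Fin n) : IsLatticePt (Pi.single j (1 : ℝ)) := by
  intro i
  rcases eq_or_ne i j with h | h
  · subst h; exact ⟨1, by simp⟩
  · exact ⟨0, by simp [Pi.single_apply, h]⟩

end AuxiliaryLemmas

set_option maxHeartbeats 4000000 in
/-- `∇̂₀ + ⋯ + ∇̂_k = (k+1)∇̂₀ + e₀*` is a reflexive polytope in `ℝ^d ⊕ ℝ^k`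
whose dual is `Conv(Δ₀ + e₀, Δ₁ + e₁, …, Δ_k + e_k)`. -/
theorem hatNabla_sum_reflexive {d k : ℕ}
    (Δ : Fin (k+1) → Set (Fin d → ℝ))
    (hlat : ∀ i, IsLatticePolytope (Δ i))
    (hrefl : IsReflexive (∑ i, Δ i))
    -- ∇̂₀ = Conv({u − Σᵢ₌₁ᵏ min⟨Δᵢ,u⟩eᵢ* : u ∈ Δ*} ∪ {e₁*, …, e_k*})
    (Q : Set (Vdk d k))
    (hQ : Q = convexHull ℝ
        ((fun u => ((u, fun i : Fin k => -(minPair (Δ i.succ) u)) : Vdk d k)) ''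
            polarDual (∑ i, Δ i) ∪
          ⋃ i : Fin k, {(((0 : Fin d → ℝ), Pi.single i 1) : Vdk d k)}))
    -- ∇̂ᵢ = ∇̂₀ − eᵢ* for i = 1, …, k
    (Nhat : Fin (k+1) → Set (Vdk d k))
    (hNhat : Nhat = Fin.cases Q
        (fun i => (fun y => y - (((0 : Fin d → ℝ), Pi.single i 1) : Vdk d k)) '' Q)) :
    -- ∇̂₀ + ∇̂₁ + ⋯ + ∇̂_k = (k+1)∇̂₀ + e₀*
    (∑ i, Nhat i =
      (fun y => y + (((0 : Fin d → ℝ), fun _ => -1) : Vdk d k)) '' (((k : ℝ) + 1) • Q)) ∧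
    -- it is a reflexive polytope w.r.t. the lattice ℤ^d ⊕ ℤ^k
    IsReflexiveV (∑ i, Nhat i) ∧
    -- its dual reflexive polytope is Conv(Δ₀ + e₀, Δ₁ + e₁, …, Δ_k + e_k)
    polarDualV (∑ i, Nhat i) =
      convexHull ℝ (⋃ i : Fin (k+1), (fun x => ((x, evec i) : Vdk d k)) '' Δ i) := by
  classical
  obtain ⟨hlatΔ, h0int, hdual⟩ := hrefl
  choose S0 hS0fin hS0lat hΔeq using hlat
  obtain ⟨SΔ', hSΔfin, hSΔlat, hΔsum⟩ := hlatΔ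
  obtain ⟨SD', hSDfin, hSDlat, hSDeq⟩ := hdual
  set c : ℝ := (k : ℝ) + 1 with hc
  have hc0 : (0 : ℝ) < c := by rw [hc]; positivity
  -- Finset data for each Δ i and for the sum
  set F : Fin (k+1) → Finset (Fin d → ℝ) := fun i => (hS0fin i).toFinset with hF
  have hFΔ : ∀ i, Δ i = convexHull ℝ ((F i : Set (Fin d → ℝ))) := by
    intro i
    rw [hΔeq i, hF]
    congr 1
    exact ((hS0fin i).coe_toFinset).symm
  have hFlat : ∀ i, ∀ x ∈ F i, IsLatticePt x := by
    intro i x hx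
    exact hS0lat i x ((hS0fin i).mem_toFinset.1 (by simpa [hF] using hx))
  set FΔ : Finset (Fin d → ℝ) := hSΔfin.toFinset with hFΔdef
  have hFΔsum : (∑ i, Δ i) = convexHull ℝ (FΔ : Set (Fin d → ℝ)) := by
    rw [hΔsum, hFΔdef]
    congr 1
    exact hSΔfin.coe_toFinset.symm
  -- nonemptiness
  have h0Δ : (0 : Fin d → ℝ) ∈ ∑ i, Δ i := interior_subset h0int
  obtain ⟨g0, hg0, hg0sum⟩ := (Set.mem_fintype_sum (fun i => Δ i) 0).1 h0Δ
  have hFne : ∀ i, (F i).Nonempty := by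
    intro i
    rcases Finset.eq_empty_or_nonempty (F i) with h | h
    · exfalso
      have hΔi : Δ i = ∅ := by rw [hFΔ i, h]; simp
      exact absurd (hg0 i) (by simp [hΔi])
    · exact h
  have hFΔne : FΔ.Nonempty := by
    rcases Finset.eq_empty_or_nonempty FΔ with h | h
    · exfalso
      have hΔe : (∑ i, Δ i) = ∅ := by rw [hFΔsum, h]; simp
      exact absurd h0Δ (by simp [hΔe])
    · exact h
  -- basic minPair facts
  have hMsum : ∀ u, minPair (∑ i, Δ i) u = ∑ i, minPair (Δ i) u := by
    intro u
    refine le_antisymm ?_ ?_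
    · have hx : ∀ i, ∃ x ∈ F i, minPair (Δ i) u = pairing x u :=
        fun i => (minPair_spec (hFne i) (hFΔ i) u).1
      choose xf hxfF hxfval using hx
      have hmem : (∑ i, xf i) ∈ ∑ i, Δ i := by
        refine (Set.mem_fintype_sum _ _).2 ⟨xf, fun i => ?_, rfl⟩
        rw [hFΔ i]
        exact subset_convexHull ℝ _ (hxfF i)
      calc minPair (∑ i, Δ i) u ≤ pairing (∑ i, xf i) u :=
            (minPair_spec hFΔne hFΔsum u).2 _ hmem
        _ = ∑ i, pairing (xf i) u := pairing_sum_left _ _ _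
        _ = ∑ i, minPair (Δ i) u := Finset.sum_congr rfl fun i _ => (hxfval i).symm
    · refine minPair_ge hFΔne hFΔsum ?_
      intro x hx
      obtain ⟨g, hg, hgsum⟩ := (Set.mem_fintype_sum (fun i => Δ i) x).1 hx
      calc ∑ i, minPair (Δ i) u ≤ ∑ i, pairing (g i) u :=
            Finset.sum_le_sum fun i _ => (minPair_spec (hFne i) (hFΔ i) u).2 _ (hg i)
        _ = pairing x u := by rw [← pairing_sum_left, hgsum]
  have hDstar : ∀ u, u ∈ polarDual (∑ i, Δ i) ↔ -1 ≤ minPair (∑ i, Δ i) u := by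
    intro u
    constructor
    · intro hu
      exact minPair_ge hFΔne hFΔsum fun x hx => hu x hx
    · intro h x hx
      exact le_trans h ((minPair_spec hFΔne hFΔsum u).2 x hx)
  have hMle0 : ∀ u, minPair (∑ i, Δ i) u ≤ 0 := by
    intro u
    have := (minPair_spec hFΔne hFΔsum u).2 0 h0Δ
    rwa [pairing_zero_left] at this
  have hMneg : ∀ u : Fin d → ℝ, u ≠ 0 → minPair (∑ i, Δ i) u < 0 := by
    intro u hu
    obtain ⟨ε0, hε0, hball⟩ := Metric.mem_nhds_iff.1 (mem_interior_iff_mem_nhds.1 h0int)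
    have hun : 0 < ‖u‖ := norm_pos_iff.2 hu
    have htneg : -(ε0 / 2) / ‖u‖ < 0 := div_neg_of_neg_of_pos (by linarith) hun
    have hmem : (-(ε0 / 2) / ‖u‖) • u ∈ ∑ i, Δ i := by
      apply hball
      refine mem_ball_zero_iff.2 ?_
      rw [norm_smul, Real.norm_eq_abs, abs_div, abs_neg, abs_of_pos (by linarith : (0:ℝ) < ε0/2),
        abs_of_pos hun, div_mul_cancel₀ _ (ne_of_gt hun)]
      linarith
    have hpp : 0 < pairing u u := by
      obtain ⟨j, hj⟩ := Function.ne_iff.1 hu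
      have hjj : (0:ℝ) < u j * u j := mul_self_pos.2 (by simpa using hj)
      exact Finset.sum_pos' (fun l _ => mul_self_nonneg _) ⟨j, Finset.mem_univ j, hjj⟩
    have h1 := (minPair_spec hFΔne hFΔsum u).2 _ hmem
    rw [pairing_smul_left] at h1
    have h2 : (-(ε0 / 2) / ‖u‖) * pairing u u < 0 := mul_neg_of_neg_of_pos htneg hpp
    linarith
  -- ======== the sum identity ========
  have hQconv : Convex ℝ Q := by rw [hQ]; exact convex_convexHull ℝ _
  have hεsum : (∑ i : Fin k, (((0:Fin d → ℝ), Pi.single i (1:ℝ)) : Vdk d k))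
      = (((0 : Fin d → ℝ), fun _ => (1:ℝ)) : Vdk d k) := by
    refine Prod.ext ?_ ?_
    · rw [Prod.fst_sum]; simp
    · rw [Prod.snd_sum]
      funext l
      rw [Finset.sum_apply]
      simp [Pi.single_apply]
  have hT : ∑ i, Nhat i = c • Q + ({(((0:Fin d → ℝ), fun _ => (-1:ℝ)) : Vdk d k)} : Set (Vdk d k)) := by
    have hN0 : Nhat 0 = Q := by rw [hNhat]; simp
    have hNs : ∀ i : Fin k, Nhat i.succ
        = Q + ({-(((0:Fin d → ℝ), Pi.single i 1) : Vdk d k)} : Set (Vdk d k)) := by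
      intro i
      rw [Set.add_singleton, hNhat]
      simp only [Fin.cases_succ]
      apply Set.image_congr
      intro y _
      rw [sub_eq_add_neg]
    have hstep : (∑ i : Fin k, (-(((0:Fin d → ℝ), Pi.single i 1) : Vdk d k)))
        = (((0:Fin d → ℝ), fun _ => (-1:ℝ)) : Vdk d k) := by
      rw [Finset.sum_neg_distrib, hεsum]
      refine Prod.ext ?_ ?_
      · simp
      · funext l; simp
    calc ∑ i, Nhat i = Nhat 0 + ∑ i : Fin k, Nhat i.succ := Fin.sum_univ_succ _
      _ = Q + ∑ i : Fin k, (Q + ({-(((0:Fin d → ℝ), Pi.single i 1) : Vdk d k)} : Set (Vdk d k))) := by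
          rw [hN0]
          congr 1
          exact Finset.sum_congr rfl fun i _ => hNs i
      _ = Q + ((∑ _i : Fin k, Q) + ∑ i : Fin k, ({-(((0:Fin d → ℝ), Pi.single i 1) : Vdk d k)} : Set (Vdk d k))) := by
          rw [Finset.sum_add_distrib]
      _ = (Q + ∑ _i : Fin k, Q) + ({∑ i : Fin k, (-(((0:Fin d → ℝ), Pi.single i 1) : Vdk d k))} : Set (Vdk d k)) := by
          rw [sum_singleton_sets, add_assoc]
      _ = (∑ _i : Fin (k+1), Q) + ({∑ i : Fin k, (-(((0:Fin d → ℝ), Pi.single i 1) : Vdk d k))} : Set (Vdk d k)) := by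
          congr 1
          exact (Fin.sum_univ_succ (fun _ : Fin (k+1) => Q)).symm
      _ = c • Q + ({(((0:Fin d → ℝ), fun _ => (-1:ℝ)) : Vdk d k)} : Set (Vdk d k)) := by
          rw [hstep]
          congr 1
          rw [Finset.sum_const, Finset.card_univ, Fintype.card_fin, hc]
          exact nsmul_set_eq_smul_real hQconv k
  -- ======== halfspace description of Q ========
  set S' : Set (Vdk d k) :=
    {p : Vdk d k | (∀ i : Fin k, -(minPair (Δ i.succ) p.1) ≤ p.2 i) ∧
      ∑ i, p.2 i ≤ 1 + minPair (Δ 0) p.1} with hS'def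
  have hS'mem : ∀ p : Vdk d k, p ∈ S' ↔
      ((∀ i : Fin k, -(minPair (Δ i.succ) p.1) ≤ p.2 i) ∧
      ∑ i, p.2 i ≤ 1 + minPair (Δ 0) p.1) := by
    intro p
    rw [hS'def]
    exact Iff.rfl
  have hS'mem' : ∀ (a : Fin d → ℝ) (b : Fin k → ℝ), ((a, b) : Vdk d k) ∈ S' ↔
      ((∀ i : Fin k, -(minPair (Δ i.succ) a) ≤ b i) ∧
      ∑ i, b i ≤ 1 + minPair (Δ 0) a) := fun a b => hS'mem (a, b)
  have hS'conv : Convex ℝ S' := by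
    intro p hp q hq a b ha hb hab
    obtain ⟨hp1, hp2⟩ := (hS'mem p).1 hp
    obtain ⟨hq1, hq2⟩ := (hS'mem q).1 hq
    refine (hS'mem _).2 ⟨?_, ?_⟩
    · intro i
      have hcc := minPair_concave2 (hFne i.succ) (hFΔ i.succ) ha hb p.1 q.1
      have h1 := mul_le_mul_of_nonneg_left (hp1 i) ha
      have h2 := mul_le_mul_of_nonneg_left (hq1 i) hb
      have hfst : (a • p + b • q).1 = a • p.1 + b • q.1 := rfl
      have hsnd : (a • p + b • q).2 i = a * p.2 i + b * q.2 i := rfl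
      rw [hfst, hsnd]
      have h3 : a * -(minPair (Δ i.succ) p.1) = -(a * minPair (Δ i.succ) p.1) := by ring
      have h4 : b * -(minPair (Δ i.succ) q.1) = -(b * minPair (Δ i.succ) q.1) := by ring
      rw [h3] at h1
      rw [h4] at h2
      linarith
    · have hcc := minPair_concave2 (hFne 0) (hFΔ 0) ha hb p.1 q.1
      have hfst : (a • p + b • q).1 = a • p.1 + b • q.1 := rfl
      have e : ∑ i, (a • p + b • q).2 i = a * ∑ i, p.2 i + b * ∑ i, q.2 i := by
        rw [show (a • p + b • q).2 = a • p.2 + b • q.2 from rfl]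
        simp only [Pi.add_apply, Pi.smul_apply, smul_eq_mul]
        rw [Finset.sum_add_distrib, Finset.mul_sum, Finset.mul_sum]
      rw [hfst, e]
      have h1 := mul_le_mul_of_nonneg_left hp2 ha
      have h2 := mul_le_mul_of_nonneg_left hq2 hb
      rw [mul_add, mul_one] at h1
      rw [mul_add, mul_one] at h2
      linarith
  have hgenS' : ((fun u => ((u, fun i : Fin k => -(minPair (Δ i.succ) u)) : Vdk d k)) ''
      polarDual (∑ i, Δ i) ∪
      ⋃ i : Fin k, {(((0 : Fin d → ℝ), Pi.single i 1) : Vdk d k)}) ⊆ S' := by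
    rintro p (⟨u, hu, rfl⟩ | hp)
    · refine (hS'mem' u _).2 ⟨fun i => le_refl _, ?_⟩
      have hM : -1 ≤ minPair (∑ i, Δ i) u := (hDstar u).1 hu
      rw [hMsum, Fin.sum_univ_succ] at hM
      rw [Finset.sum_neg_distrib]
      linarith
    · simp only [Set.mem_iUnion, Set.mem_singleton_iff] at hp
      obtain ⟨j, rfl⟩ := hp
      refine (hS'mem' 0 (Pi.single j 1)).2 ⟨?_, ?_⟩
      · intro i
        rw [minPair_zero (hFne i.succ) (hFΔ i.succ), neg_zero]
        rcases eq_or_ne i j with h | h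
        · subst h; simp
        · simp [Pi.single_apply, h]
      · rw [minPair_zero (hFne 0) (hFΔ 0)]
        have hsum1 : ∑ i : Fin k, Pi.single j (1:ℝ) i = 1 := by
          simp [Pi.single_apply]
        rw [hsum1]
        norm_num
  have hS'Q : S' ⊆ Q := by
    intro p hp
    obtain ⟨hp1, hp2⟩ := (hS'mem p).1 hp
    have hδ : ∀ i : Fin k, 0 ≤ p.2 i + minPair (Δ i.succ) p.1 := by
      intro i; have := hp1 i; linarith
    have hD0 : 0 ≤ ∑ i : Fin k, (p.2 i + minPair (Δ i.succ) p.1) :=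
      Finset.sum_nonneg fun i _ => hδ i
    have hDM : ∑ i : Fin k, (p.2 i + minPair (Δ i.succ) p.1) ≤ 1 + minPair (∑ i, Δ i) p.1 := by
      rw [hMsum, Fin.sum_univ_succ, Finset.sum_add_distrib]
      linarith
    have hM0 : minPair (∑ i, Δ i) p.1 ≤ 0 := hMle0 p.1
    rw [hQ]
    rcases lt_or_eq_of_le (show ∑ i : Fin k, (p.2 i + minPair (Δ i.succ) p.1) ≤ 1 by linarith)
      with hD1 | hD1
    · -- strict case
      have hr0 : 0 < 1 - ∑ i : Fin k, (p.2 i + minPair (Δ i.succ) p.1) := by linarith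
      set r : ℝ := 1 - ∑ i : Fin k, (p.2 i + minPair (Δ i.succ) p.1) with hrdef
      have hwm : ∀ i : Fin (k+1), minPair (Δ i) (r⁻¹ • p.1) = r⁻¹ * minPair (Δ i) p.1 :=
        fun i => minPair_smul (hFne i) (hFΔ i) (inv_nonneg.2 hr0.le) p.1
      have hwD : r⁻¹ • p.1 ∈ polarDual (∑ i, Δ i) := by
        refine (hDstar _).2 ?_
        rw [minPair_smul hFΔne hFΔsum (inv_nonneg.2 hr0.le) p.1]
        have h1 : -r ≤ minPair (∑ i, Δ i) p.1 := by rw [hrdef]; linarith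
        have h2 := mul_le_mul_of_nonneg_left h1 (inv_nonneg.2 hr0.le)
        rw [show r⁻¹ * (-r) = -(r⁻¹ * r) from by ring, inv_mul_cancel₀ (ne_of_gt hr0)] at h2
        linarith
      have hmem : (∑ j : Fin (k+1),
          (Fin.cases r (fun i => p.2 i + minPair (Δ i.succ) p.1) j : ℝ) •
          (Fin.cases ((r⁻¹ • p.1, fun i : Fin k => -(minPair (Δ i.succ) (r⁻¹ • p.1))) : Vdk d k)
            (fun i => (((0 : Fin d → ℝ), Pi.single i 1) : Vdk d k)) j)) ∈
          convexHull ℝ ((fun u => ((u, fun i : Fin k => -(minPair (Δ i.succ) u)) : Vdk d k)) ''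
            polarDual (∑ i, Δ i) ∪
            ⋃ i : Fin k, {(((0 : Fin d → ℝ), Pi.single i 1) : Vdk d k)}) := by
        refine Convex.sum_mem (convex_convexHull ℝ _) (fun j _ => ?_) ?_ (fun j _ => ?_)
        · induction j using Fin.cases with
          | zero => simpa using hr0.le
          | succ i => simpa using hδ i
        · rw [Fin.sum_univ_succ]
          simp only [Fin.cases_zero, Fin.cases_succ]
          rw [hrdef]
          ring
        · induction j using Fin.cases with
          | zero =>
            simp only [Fin.cases_zero]
            exact subset_convexHull ℝ _ (Set.mem_union_left _ ⟨_, hwD, rfl⟩)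
          | succ i =>
            simp only [Fin.cases_succ]
            exact subset_convexHull ℝ _ (Set.mem_union_right _ (Set.mem_iUnion.2 ⟨i, rfl⟩))
      have hpe : p = ∑ j : Fin (k+1),
          (Fin.cases r (fun i => p.2 i + minPair (Δ i.succ) p.1) j : ℝ) •
          (Fin.cases ((r⁻¹ • p.1, fun i : Fin k => -(minPair (Δ i.succ) (r⁻¹ • p.1))) : Vdk d k)
            (fun i => (((0 : Fin d → ℝ), Pi.single i 1) : Vdk d k)) j) := by
        refine Prod.ext ?_ ?_
        · rw [Prod.fst_sum, Fin.sum_univ_succ]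
          simp only [Fin.cases_zero, Fin.cases_succ, Prod.smul_fst, smul_zero]
          rw [smul_inv_smul₀ (ne_of_gt hr0)]
          simp
        · funext i
          rw [Prod.snd_sum, Finset.sum_apply, Fin.sum_univ_succ]
          simp only [Fin.cases_zero, Fin.cases_succ, Prod.smul_snd, Pi.smul_apply, smul_eq_mul]
          have e1 : r * -(minPair (Δ i.succ) (r⁻¹ • p.1)) = -(minPair (Δ i.succ) p.1) := by
            rw [hwm i.succ]
            calc r * -(r⁻¹ * minPair (Δ i.succ) p.1)
                = -((r * r⁻¹) * minPair (Δ i.succ) p.1) := by ring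
              _ = -(minPair (Δ i.succ) p.1) := by
                  rw [mul_inv_cancel₀ (ne_of_gt hr0), one_mul]
          rw [e1]
          have e2 : ∑ l : Fin k, (p.2 l + minPair (Δ l.succ) p.1) * (Pi.single l 1 : Fin k → ℝ) i
              = p.2 i + minPair (Δ i.succ) p.1 := by
            simp [Pi.single_apply, mul_ite, Finset.sum_ite_eq]
          rw [e2]
          ring
      rw [hpe]
      exact hmem
    · -- boundary case: forces p.1 = 0
      have hM0' : 0 ≤ minPair (∑ i, Δ i) p.1 := by
        rw [← hD1] at hDM
        linarith
      have hp10 : p.1 = 0 := by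
        by_contra h
        exact absurd (hMneg p.1 h) (by linarith)
      have hz : ∀ i : Fin k, minPair (Δ i.succ) p.1 = 0 := by
        intro i; rw [hp10]; exact minPair_zero (hFne i.succ) (hFΔ i.succ)
      have hsum1 : ∑ i : Fin k, p.2 i = 1 := by
        calc ∑ i : Fin k, p.2 i
            = ∑ i : Fin k, (p.2 i + minPair (Δ i.succ) p.1) :=
              Finset.sum_congr rfl fun i _ => by rw [hz i, add_zero]
          _ = 1 := hD1
      have hδ' : ∀ i, 0 ≤ p.2 i := by
        intro i
        have := hδ i
        rw [hz i, add_zero] at this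
        exact this
      have hmem := Convex.sum_mem (t := (Finset.univ : Finset (Fin k))) (convex_convexHull ℝ
          ((fun u => ((u, fun i : Fin k => -(minPair (Δ i.succ) u)) : Vdk d k)) ''
            polarDual (∑ i, Δ i) ∪
            ⋃ i : Fin k, {(((0 : Fin d → ℝ), Pi.single i 1) : Vdk d k)}))
        (fun i _ => hδ' i) hsum1
        (fun i _ => subset_convexHull ℝ _ (Set.mem_union_right _ (Set.mem_iUnion.2 ⟨i, rfl⟩)))
      have hpe : p = ∑ i : Fin k, p.2 i • (((0:Fin d → ℝ), Pi.single i 1) : Vdk d k) := by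
        refine Prod.ext ?_ ?_
        · rw [Prod.fst_sum, hp10]
          simp
        · funext i
          rw [Prod.snd_sum, Finset.sum_apply]
          simp [Pi.single_apply, mul_ite, Finset.sum_ite_eq]
      rw [hpe]
      exact hmem
  have hQS' : Q = S' := by
    refine Set.Subset.antisymm ?_ hS'Q
    rw [hQ]
    exact convexHull_min hgenS' hS'conv
  -- ======== finite lattice generation of Q ========
  have hSDsub : SD' ⊆ polarDual (∑ i, Δ i) := by
    rw [hSDeq]; exact subset_convexHull ℝ SD'
  have h0D : (0 : Fin d → ℝ) ∈ polarDual (∑ i, Δ i) := by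
    intro x _
    rw [pairing_zero_right]
    norm_num
  set G : Set (Vdk d k) :=
    (fun u => ((u, fun i : Fin k => -(minPair (Δ i.succ) u)) : Vdk d k)) ''
        (insert (0 : Fin d → ℝ) SD') ∪
      ⋃ i : Fin k, {(((0 : Fin d → ℝ), Pi.single i 1) : Vdk d k)} with hGdef
  have hφ0 : (((0 : Fin d → ℝ), fun i : Fin k => -(minPair (Δ i.succ) (0 : Fin d → ℝ))) : Vdk d k)
      = (0 : Vdk d k) := by
    refine Prod.ext rfl ?_
    funext i
    show -(minPair (Δ i.succ) 0) = 0
    rw [minPair_zero (hFne i.succ) (hFΔ i.succ), neg_zero]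
  have h0G : (0 : Vdk d k) ∈ convexHull ℝ G :=
    subset_convexHull ℝ G (by rw [hGdef]; exact Set.mem_union_left _ ⟨0, Set.mem_insert _ _, hφ0⟩)
  have hcrux : ∀ u ∈ polarDual (∑ i, Δ i),
      ((u, fun i : Fin k => -(minPair (Δ i.succ) u)) : Vdk d k) ∈ convexHull ℝ G := by
    intro u hu
    have hM1 : -1 ≤ minPair (∑ i, Δ i) u := (hDstar u).1 hu
    have hM0u : minPair (∑ i, Δ i) u ≤ 0 := hMle0 u
    rcases eq_or_lt_of_le hM0u with hM0e | hM0lt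
    · have hu0 : u = 0 := by
        by_contra h
        have := hMneg u h
        rw [hM0e] at this
        exact lt_irrefl 0 this
      subst hu0
      rw [hφ0]
      exact h0G
    · set μ : ℝ := -(minPair (∑ i, Δ i) u) with hμdef
      have hμ0 : 0 < μ := by rw [hμdef]; linarith
      have hμ1 : μ ≤ 1 := by rw [hμdef]; linarith
      have hMw : minPair (∑ i, Δ i) (μ⁻¹ • u) = -1 := by
        rw [minPair_smul hFΔne hFΔsum (inv_nonneg.2 hμ0.le),
          show minPair (∑ i, Δ i) u = -μ from by rw [hμdef]; ring,
          show μ⁻¹ * -μ = -(μ⁻¹ * μ) from by ring, inv_mul_cancel₀ (ne_of_gt hμ0)]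
      have hwD : μ⁻¹ • u ∈ polarDual (∑ i, Δ i) := (hDstar _).2 (by rw [hMw])
      have hwSD : μ⁻¹ • u ∈ convexHull ℝ SD' := by rw [← hSDeq]; exact hwD
      rw [convexHull_eq] at hwSD
      obtain ⟨ι', t, wt, zf, hwt0, hwt1, hzf, hcm⟩ := hwSD
      rw [Finset.centerMass_eq_of_sum_1 _ _ hwt1] at hcm
      have hzfD : ∀ j ∈ t, -1 ≤ minPair (∑ i, Δ i) (zf j) :=
        fun j hj => (hDstar _).1 (hSDsub (hzf j hj))
      have key1 : ∑ j ∈ t, wt j * minPair (∑ i, Δ i) (zf j) = -1 := by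
        refine le_antisymm ?_ ?_
        · have hcb := minPair_combo hFΔne hFΔsum t wt zf hwt0
          rw [hcm, hMw] at hcb
          exact hcb
        · have hone : ∑ j ∈ t, wt j * (-1 : ℝ) = -1 := by
            rw [← Finset.sum_mul, hwt1, one_mul]
          rw [← hone]
          exact Finset.sum_le_sum fun j hj => mul_le_mul_of_nonneg_left (hzfD j hj) (hwt0 j hj)
      have hdnn : ∀ i : Fin (k+1),
          ∑ j ∈ t, wt j * minPair (Δ i) (zf j) ≤ minPair (Δ i) (μ⁻¹ • u) := by
        intro i
        have hcb := minPair_combo (hFne i) (hFΔ i) t wt zf hwt0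
        rw [hcm] at hcb
        exact hcb
      have key2 : ∀ i : Fin (k+1),
          minPair (Δ i) (μ⁻¹ • u) = ∑ j ∈ t, wt j * minPair (Δ i) (zf j) := by
        have hzero : ∑ i : Fin (k+1),
            (minPair (Δ i) (μ⁻¹ • u) - ∑ j ∈ t, wt j * minPair (Δ i) (zf j)) = 0 := by
          rw [Finset.sum_sub_distrib, ← hMsum, Finset.sum_comm]
          have hinner : ∀ j ∈ t, ∑ i : Fin (k+1), wt j * minPair (Δ i) (zf j)
              = wt j * minPair (∑ i, Δ i) (zf j) := by
            intro j hj
            rw [← Finset.mul_sum, ← hMsum]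
          rw [Finset.sum_congr rfl hinner, key1, hMw]
          ring
        intro i
        have hterm := (Finset.sum_eq_zero_iff_of_nonneg
          (fun i (_ : i ∈ Finset.univ) => sub_nonneg.2 (hdnn i))).1 hzero i (Finset.mem_univ i)
        linarith
      have hφw : ((μ⁻¹ • u, fun i : Fin k => -(minPair (Δ i.succ) (μ⁻¹ • u))) : Vdk d k)
          = ∑ j ∈ t, wt j • ((zf j, fun i : Fin k => -(minPair (Δ i.succ) (zf j))) : Vdk d k) := by
        refine Prod.ext ?_ ?_
        · rw [Prod.fst_sum]
          simp only [Prod.smul_fst]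
          exact hcm.symm
        · funext i
          rw [Prod.snd_sum, Finset.sum_apply]
          simp only [Prod.smul_snd, Pi.smul_apply, smul_eq_mul]
          rw [key2 i.succ, ← Finset.sum_neg_distrib]
          exact Finset.sum_congr rfl fun j _ => by ring
      have hφwmem : ((μ⁻¹ • u, fun i : Fin k => -(minPair (Δ i.succ) (μ⁻¹ • u))) : Vdk d k)
          ∈ convexHull ℝ G := by
        rw [hφw]
        refine Convex.sum_mem (convex_convexHull ℝ G) hwt0 hwt1 (fun j hj => ?_)
        exact subset_convexHull ℝ G (by
          rw [hGdef]
          exact Set.mem_union_left _ ⟨zf j, Set.mem_insert_of_mem _ (hzf j hj), rfl⟩)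
      have hinv : μ * μ⁻¹ = 1 := mul_inv_cancel₀ (ne_of_gt hμ0)
      have hfin : ((u, fun i : Fin k => -(minPair (Δ i.succ) u)) : Vdk d k)
          = μ • ((μ⁻¹ • u, fun i : Fin k => -(minPair (Δ i.succ) (μ⁻¹ • u))) : Vdk d k)
            + (1 - μ) • (0 : Vdk d k) := by
        refine Prod.ext ?_ ?_
        · show u = μ • (μ⁻¹ • u) + (1 - μ) • (0 : Fin d → ℝ)
          rw [smul_inv_smul₀ (ne_of_gt hμ0), smul_zero, add_zero]
        · funext i
          show -(minPair (Δ i.succ) u)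
            = μ * -(minPair (Δ i.succ) (μ⁻¹ • u)) + (1 - μ) * 0
          rw [minPair_smul (hFne i.succ) (hFΔ i.succ) (inv_nonneg.2 hμ0.le)]
          linear_combination (minPair (Δ i.succ) u) * hinv
      rw [hfin]
      exact (convex_convexHull ℝ G) hφwmem h0G hμ0.le (by linarith) (by ring)
  have hQG : Q = convexHull ℝ G := by
    rw [hQ]
    refine Set.Subset.antisymm (convexHull_min ?_ (convex_convexHull ℝ G))
      (convexHull_min ?_ (convex_convexHull ℝ _))
    · rintro p (⟨u, hu, rfl⟩ | hp)
      · exact hcrux u hu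
      · exact subset_convexHull ℝ G (by rw [hGdef]; exact Set.mem_union_right _ hp)
    · rw [hGdef]
      rintro p (⟨z, hz, rfl⟩ | hp)
      · rcases Set.mem_insert_iff.1 hz with rfl | hz'
        · exact subset_convexHull ℝ _ (Set.mem_union_left _ ⟨0, h0D, rfl⟩)
        · exact subset_convexHull ℝ _ (Set.mem_union_left _ ⟨z, hSDsub hz', rfl⟩)
      · exact subset_convexHull ℝ _ (Set.mem_union_right _ hp)
  -- ======== membership criterion for the sum polytope ========
  have hSmem : ∀ z : Vdk d k,
      (∀ j : Fin k, -1 ≤ minPair (Δ j.succ) z.1 + z.2 j) →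
      (∑ j, z.2 j ≤ 1 + minPair (Δ 0) z.1) →
      z ∈ c • S' + ({(((0:Fin d → ℝ), fun _ => (-1:ℝ)) : Vdk d k)} : Set (Vdk d k)) := by
    intro z h1 h2
    have hcin : (0:ℝ) ≤ c⁻¹ := inv_nonneg.2 hc0.le
    have hq1 : (c⁻¹ • (z - (((0:Fin d → ℝ), fun _ => (-1:ℝ)) : Vdk d k))).1 = c⁻¹ • z.1 := by
      show c⁻¹ • (z.1 - 0) = c⁻¹ • z.1
      rw [sub_zero]
    have hq2 : ∀ i : Fin k, (c⁻¹ • (z - (((0:Fin d → ℝ), fun _ => (-1:ℝ)) : Vdk d k))).2 i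
        = c⁻¹ * (z.2 i + 1) := by
      intro i
      show c⁻¹ * (z.2 i - (-1)) = c⁻¹ * (z.2 i + 1)
      ring
    have hqS : c⁻¹ • (z - (((0:Fin d → ℝ), fun _ => (-1:ℝ)) : Vdk d k)) ∈ S' := by
      refine (hS'mem _).2 ⟨?_, ?_⟩
      · intro i
        rw [hq1, hq2 i, minPair_smul (hFne i.succ) (hFΔ i.succ) hcin]
        have h3 := mul_nonneg hcin
          (show (0:ℝ) ≤ minPair (Δ i.succ) z.1 + z.2 i + 1 by linarith [h1 i])
        rw [mul_add, mul_add, mul_one] at h3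
        linarith
      · rw [hq1, minPair_smul (hFne 0) (hFΔ 0) hcin]
        have hsum : ∑ i : Fin k, (c⁻¹ • (z - (((0:Fin d → ℝ), fun _ => (-1:ℝ)) : Vdk d k))).2 i
            = c⁻¹ * (∑ i : Fin k, z.2 i) + c⁻¹ * (k:ℝ) := by
          rw [Finset.sum_congr rfl (fun i (_ : i ∈ Finset.univ) => hq2 i), ← Finset.mul_sum,
            Finset.sum_add_distrib, Finset.sum_const, Finset.card_univ, Fintype.card_fin,
            nsmul_eq_mul, mul_one, mul_add]
        rw [hsum]
        have h4 : c⁻¹ * ((k:ℝ) + 1) = 1 := by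
          rw [← hc]
          exact inv_mul_cancel₀ (ne_of_gt hc0)
        rw [mul_add, mul_one] at h4
        have h5 := mul_le_mul_of_nonneg_left h2 hcin
        rw [mul_add, mul_one] at h5
        linarith
    refine Set.mem_add.2 ⟨c • (c⁻¹ • (z - (((0:Fin d → ℝ), fun _ => (-1:ℝ)) : Vdk d k))),
      Set.smul_mem_smul_set hqS, (((0:Fin d → ℝ), fun _ => (-1:ℝ)) : Vdk d k), rfl, ?_⟩
    rw [smul_inv_smul₀ (ne_of_gt hc0)]
    abel
  -- ======== 0 is interior to the sum ========
  have hCbound : ∃ C : ℝ, 0 ≤ C ∧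
      ∀ (i : Fin (k+1)) (u : Fin d → ℝ), -(C * ‖u‖) ≤ minPair (Δ i) u := by
    have hBnn : ∀ i : Fin (k+1), 0 ≤ (F i).sup' (hFne i) (fun x => ∑ j, |x j|) := by
      intro i
      obtain ⟨x, hx⟩ := hFne i
      exact le_trans (Finset.sum_nonneg fun j _ => abs_nonneg _) (Finset.le_sup' (fun x => ∑ j, |x j|) hx)
    refine ⟨∑ i, (F i).sup' (hFne i) (fun x => ∑ j, |x j|),
      Finset.sum_nonneg fun i _ => hBnn i, ?_⟩
    intro i u
    obtain ⟨⟨x₀, hx₀S, h⟩, -⟩ := minPair_spec (hFne i) (hFΔ i) u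
    rw [h]
    have h1 : |pairing x₀ u| ≤ ((F i).sup' (hFne i) (fun x => ∑ j, |x j|)) * ‖u‖ := by
      calc |pairing x₀ u| ≤ ∑ j, |x₀ j * u j| := Finset.abs_sum_le_sum_abs _ _
        _ = ∑ j, |x₀ j| * |u j| := by simp [abs_mul]
        _ ≤ ∑ j, |x₀ j| * ‖u‖ := Finset.sum_le_sum fun j _ =>
            mul_le_mul_of_nonneg_left (by
              simpa [Real.norm_eq_abs] using norm_le_pi_norm u j) (abs_nonneg _)
        _ = (∑ j, |x₀ j|) * ‖u‖ := by rw [Finset.sum_mul]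
        _ ≤ _ := mul_le_mul_of_nonneg_right (Finset.le_sup' (fun x => ∑ j, |x j|) hx₀S) (norm_nonneg u)
    have h2 : ((F i).sup' (hFne i) (fun x => ∑ j, |x j|))
        ≤ ∑ i', (F i').sup' (hFne i') (fun x => ∑ j, |x j|) :=
      Finset.single_le_sum (fun i' (_ : i' ∈ Finset.univ) => hBnn i') (Finset.mem_univ i)
    have h3 := mul_le_mul_of_nonneg_right h2 (norm_nonneg u)
    have h4 := neg_abs_le (pairing x₀ u)
    linarith
  obtain ⟨C, hC0, hCb⟩ := hCbound
  have hinterior : (0 : Vdk d k) ∈ interior (∑ i, Nhat i) := by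
    have hεr0 : 0 < (C + (k:ℝ) + 2)⁻¹ := by positivity
    set εr : ℝ := (C + (k:ℝ) + 2)⁻¹ with hεrdef
    have hexp : C * εr + (k:ℝ) * εr + 2 * εr = 1 := by
      rw [hεrdef]
      field_simp
    have hknn : 0 ≤ (k:ℝ) * εr := mul_nonneg (Nat.cast_nonneg k) hεr0.le
    have hCe : 0 ≤ C * εr := mul_nonneg hC0 hεr0.le
    refine mem_interior.2 ⟨Metric.ball 0 εr, ?_, Metric.isOpen_ball, Metric.mem_ball_self hεr0⟩
    intro x hx
    have hxn : ‖x‖ < εr := by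
      rw [← dist_zero_right]
      exact Metric.mem_ball.1 hx
    have hx1 : ‖x.1‖ ≤ ‖x‖ := norm_fst_le x
    have hx2 : ∀ j : Fin k, |x.2 j| ≤ ‖x‖ :=
      fun j => le_trans (by simpa [Real.norm_eq_abs] using norm_le_pi_norm x.2 j) (norm_snd_le x)
    rw [hT, hQS']
    refine hSmem x ?_ ?_
    · intro j
      have hm := hCb j.succ x.1
      have hmb : C * ‖x.1‖ ≤ C * εr :=
        mul_le_mul_of_nonneg_left (le_of_lt (lt_of_le_of_lt hx1 hxn)) hC0
      have hxj := (abs_le.1 (hx2 j)).1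
      linarith
    · have hm := hCb 0 x.1
      have hmb : C * ‖x.1‖ ≤ C * εr :=
        mul_le_mul_of_nonneg_left (le_of_lt (lt_of_le_of_lt hx1 hxn)) hC0
      have hsum : ∑ j, x.2 j ≤ (k:ℝ) * εr := by
        have hterm : ∀ j : Fin k, x.2 j ≤ εr := fun j =>
          le_of_lt (lt_of_le_of_lt (le_trans (le_abs_self _) (hx2 j)) hxn)
        calc ∑ j, x.2 j ≤ ∑ _j : Fin k, εr := Finset.sum_le_sum fun j _ => hterm j
          _ = (k:ℝ) * εr := by
              rw [Finset.sum_const, Finset.card_univ, Fintype.card_fin, nsmul_eq_mul]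
      linarith
  -- ======== the sum is a lattice polytope ========
  have hGfin : G.Finite := by
    rw [hGdef]
    refine Set.Finite.union ?_ ?_
    · exact (hSDfin.insert 0).image _
    · exact Set.finite_iUnion fun i => Set.finite_singleton _
  have hTG : ∑ i, Nhat i = convexHull ℝ
      ((fun g => c • g + (((0:Fin d → ℝ), fun _ => (-1:ℝ)) : Vdk d k)) '' G) := by
    rw [hT, hQG,
      show c • convexHull ℝ G = convexHull ℝ (c • G) from (convexHull_smul c G).symm,
      show ({(((0:Fin d → ℝ), fun _ => (-1:ℝ)) : Vdk d k)} : Set (Vdk d k))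
          = convexHull ℝ {(((0:Fin d → ℝ), fun _ => (-1:ℝ)) : Vdk d k)} from
        (convexHull_singleton _).symm,
      ← convexHull_add]
    congr 1
    rw [Set.add_singleton, ← Set.image_smul, Set.image_image]
  have hTlat : IsLatticePolytopeV (∑ i, Nhat i) := by
    refine ⟨_, hGfin.image _, ?_, hTG⟩
    rintro y ⟨g, hg, rfl⟩
    rw [hGdef] at hg
    rcases hg with ⟨z, hz, rfl⟩ | hg
    · have hzlat : IsLatticePt z := by
        rcases Set.mem_insert_iff.1 hz with rfl | hz'
        · exact latticePt_zero
        · exact hSDlat z hz'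
      constructor
      · intro j
        obtain ⟨a, ha⟩ := hzlat j
        refine ⟨(k+1 : ℤ) * a, ?_⟩
        show c * z j + 0 = _
        rw [add_zero, hc, ha]
        push_cast
        ring
      · intro j
        obtain ⟨a, ha⟩ := minPair_int (hFne j.succ) (hFΔ j.succ) (hFlat j.succ) hzlat
        refine ⟨-((k+1 : ℤ) * a + 1), ?_⟩
        show c * -(minPair (Δ j.succ) z) + (-1) = _
        rw [hc, ha]
        push_cast
        ring
    · simp only [Set.mem_iUnion, Set.mem_singleton_iff] at hg
      obtain ⟨i, rfl⟩ := hg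
      constructor
      · intro j
        refine ⟨0, ?_⟩
        show c * 0 + 0 = _
        simp
      · intro j
        rcases eq_or_ne j i with rfl | hj
        · refine ⟨(k : ℤ), ?_⟩
          show c * (Pi.single j 1 : Fin k → ℝ) j + (-1) = _
          rw [hc, Pi.single_eq_same]
          push_cast
          ring
        · refine ⟨-1, ?_⟩
          show c * (Pi.single i 1 : Fin k → ℝ) j + (-1) = _
          rw [Pi.single_eq_of_ne hj]
          push_cast
          ring
  -- ======== the dual polytope ========
  have hevec0 : (evec 0 : Fin k → ℝ) = fun _ => -1 := by simp [evec]
  have hevecs : ∀ i : Fin k, (evec i.succ : Fin k → ℝ) = Pi.single i (1:ℝ) := by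
    intro i; simp [evec]
  have hPsubdual : convexHull ℝ (⋃ i : Fin (k+1), (fun x => ((x, evec i) : Vdk d k)) '' Δ i)
      ⊆ polarDualV (∑ i, Nhat i) := by
    refine convexHull_min ?_ (convex_polarDualV _)
    intro y hy
    simp only [Set.mem_iUnion, Set.mem_image] at hy
    obtain ⟨i, x, hxΔ, rfl⟩ := hy
    intro p hp
    rw [hT, hQS'] at hp
    obtain ⟨q', hq', w', hw', rfl⟩ := Set.mem_add.1 hp
    obtain ⟨q, hq, rfl⟩ := Set.mem_smul_set.1 hq'
    rw [Set.mem_singleton_iff] at hw'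
    subst hw'
    obtain ⟨hq1, hq2⟩ := (hS'mem q).1 hq
    rw [pairingV_add_left, pairingV_smul_left]
    induction i using Fin.cases with
    | zero =>
      have e1 : pairingV q ((x, evec 0) : Vdk d k) = pairing x q.1 - ∑ j, q.2 j := by
        show pairing q.1 x + pairing q.2 (evec 0) = _
        rw [hevec0, pairing_negone_right, pairing_comm]
        ring
      have e2 : pairingV (((0:Fin d → ℝ), fun _ => (-1:ℝ)) : Vdk d k) ((x, evec 0) : Vdk d k)
          = (k : ℝ) := by
        show pairing 0 x + pairing (fun _ => (-1:ℝ)) (evec 0) = (k:ℝ)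
        rw [pairing_zero_left, hevec0]
        simp [pairing]
      rw [e1, e2]
      have hxm := (minPair_spec (hFne 0) (hFΔ 0) q.1).2 x hxΔ
      have h6 : (-1 : ℝ) ≤ pairing x q.1 - ∑ j, q.2 j := by linarith
      have h7 := mul_le_mul_of_nonneg_left h6 hc0.le
      have h8 : c * (-1) = -(k:ℝ) - 1 := by rw [hc]; ring
      linarith
    | succ j =>
      have e1 : pairingV q ((x, evec j.succ) : Vdk d k) = pairing x q.1 + q.2 j := by
        show pairing q.1 x + pairing q.2 (evec j.succ) = _
        rw [hevecs j, pairing_single_right, pairing_comm]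
      have e2 : pairingV (((0:Fin d → ℝ), fun _ => (-1:ℝ)) : Vdk d k) ((x, evec j.succ) : Vdk d k)
          = -1 := by
        show pairing 0 x + pairing (fun _ => (-1:ℝ)) (evec j.succ) = (-1 : ℝ)
        rw [pairing_zero_left, hevecs j, pairing_comm, pairing_single_left]
        norm_num
      rw [e1, e2]
      have hxm := (minPair_spec (hFne j.succ) (hFΔ j.succ) q.1).2 x hxΔ
      have h6 : (0:ℝ) ≤ pairing x q.1 + q.2 j := by linarith [hq1 j]
      have h7 := mul_nonneg hc0.le h6
      linarith
  have hevlat : ∀ i : Fin (k+1), IsLatticePt (evec i : Fin k → ℝ) := by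
    intro i
    induction i using Fin.cases with
    | zero =>
      intro j
      refine ⟨-1, ?_⟩
      rw [hevec0]
      push_cast
      ring
    | succ j =>
      rw [hevecs j]
      exact latticePt_single j
  have haff : ∀ i : Fin (k+1), ∃ f : (Fin d → ℝ) →ᵃ[ℝ] Vdk d k,
      ⇑f = fun x => ((x, evec i) : Vdk d k) := by
    intro i
    refine ⟨AffineMap.mk' (fun x => ((x, evec i) : Vdk d k))
      (LinearMap.prod LinearMap.id 0) 0 ?_, rfl⟩
    intro p
    show ((p, evec i) : Vdk d k)
      = (LinearMap.prod LinearMap.id 0) (p -ᵥ 0) +ᵥ (((0:Fin d → ℝ), evec i) : Vdk d k)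
    refine Prod.ext ?_ ?_ <;> simp [vsub_eq_sub, vadd_eq_add]
  have hPKS : convexHull ℝ (⋃ i : Fin (k+1), (fun x => ((x, evec i) : Vdk d k)) '' Δ i)
      = convexHull ℝ (⋃ i : Fin (k+1), (fun x => ((x, evec i) : Vdk d k)) '' S0 i) := by
    have himg : ∀ i : Fin (k+1), (fun x => ((x, evec i) : Vdk d k)) '' Δ i
        = convexHull ℝ ((fun x => ((x, evec i) : Vdk d k)) '' S0 i) := by
      intro i
      obtain ⟨f, hf⟩ := haff i
      rw [hΔeq i, ← hf, AffineMap.image_convexHull, hf]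
    calc convexHull ℝ (⋃ i : Fin (k+1), (fun x => ((x, evec i) : Vdk d k)) '' Δ i)
        = convexHull ℝ (⋃ i : Fin (k+1),
            convexHull ℝ ((fun x => ((x, evec i) : Vdk d k)) '' S0 i)) := by
          congr 1
          exact Set.iUnion_congr himg
      _ = convexHull ℝ (⋃ i : Fin (k+1), (fun x => ((x, evec i) : Vdk d k)) '' S0 i) :=
          convexHull_iUnion_convexHull _
  have hPfin : (⋃ i : Fin (k+1), (fun x => ((x, evec i) : Vdk d k)) '' S0 i).Finite :=
    Set.finite_iUnion fun i => (hS0fin i).image _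
  have hPlat : ∀ y ∈ ⋃ i : Fin (k+1), (fun x => ((x, evec i) : Vdk d k)) '' S0 i,
      IsLatticePtV y := by
    intro y hy
    simp only [Set.mem_iUnion, Set.mem_image] at hy
    obtain ⟨i, x, hx, rfl⟩ := hy
    exact ⟨hS0lat i x hx, hevlat i⟩
  have hPclosed : IsClosed (convexHull ℝ
      (⋃ i : Fin (k+1), (fun x => ((x, evec i) : Vdk d k)) '' Δ i)) := by
    rw [hPKS]
    exact (hPfin.isCompact_convexHull (𝕜 := ℝ)).isClosed
  have h0P : (0 : Vdk d k) ∈ convexHull ℝ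
      (⋃ i : Fin (k+1), (fun x => ((x, evec i) : Vdk d k)) '' Δ i) := by
    have hev : ∑ i : Fin (k+1), (evec i : Fin k → ℝ) = 0 := by
      funext j
      rw [Finset.sum_apply, Fin.sum_univ_succ]
      simp [hevec0, hevecs, Pi.single_apply]
    have hzero : ∑ i : Fin (k+1), c⁻¹ • ((g0 i, evec i) : Vdk d k) = (0 : Vdk d k) := by
      refine Prod.ext ?_ ?_
      · rw [Prod.fst_sum]
        simp only [Prod.smul_fst]
        rw [← Finset.smul_sum, hg0sum, smul_zero]
        rfl
      · rw [Prod.snd_sum]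
        simp only [Prod.smul_snd]
        rw [← Finset.smul_sum, hev, smul_zero]
        rfl
    rw [← hzero]
    refine Convex.sum_mem (convex_convexHull ℝ _) (fun i _ => inv_nonneg.2 hc0.le) ?_
      (fun i _ => ?_)
    · rw [Finset.sum_const, Finset.card_univ, Fintype.card_fin, nsmul_eq_mul]
      push_cast
      rw [← hc]
      exact mul_inv_cancel₀ (ne_of_gt hc0)
    · exact subset_convexHull ℝ _ (Set.mem_iUnion.2 ⟨i, ⟨g0 i, hg0 i, rfl⟩⟩)
  have hlemB : ∀ z ∈ polarDualV (convexHull ℝ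
      (⋃ i : Fin (k+1), (fun x => ((x, evec i) : Vdk d k)) '' Δ i)),
      z ∈ c • S' + ({(((0:Fin d → ℝ), fun _ => (-1:ℝ)) : Vdk d k)} : Set (Vdk d k)) := by
    intro z hz
    refine hSmem z ?_ ?_
    · intro j
      have hball : ∀ x ∈ Δ j.succ, -1 - z.2 j ≤ pairing x z.1 := by
        intro x hx
        have h8 := hz _ (subset_convexHull ℝ _ (Set.mem_iUnion.2 ⟨j.succ, ⟨x, hx, rfl⟩⟩))
        have e : pairingV ((x, evec j.succ) : Vdk d k) z = pairing x z.1 + z.2 j := by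
          show pairing x z.1 + pairing (evec j.succ) z.2 = _
          rw [hevecs j, pairing_single_left]
        rw [e] at h8
        linarith
      have h9 := minPair_ge (hFne j.succ) (hFΔ j.succ) hball
      linarith
    · have hball : ∀ x ∈ Δ 0, -1 + ∑ j, z.2 j ≤ pairing x z.1 := by
        intro x hx
        have h8 := hz _ (subset_convexHull ℝ _ (Set.mem_iUnion.2 ⟨0, ⟨x, hx, rfl⟩⟩))
        have e : pairingV ((x, evec 0) : Vdk d k) z = pairing x z.1 - ∑ j, z.2 j := by
          show pairing x z.1 + pairing (evec 0) z.2 = _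
          rw [hevec0, pairing_negone_left]
          ring
        rw [e] at h8
        linarith
      have h9 := minPair_ge (hFne 0) (hFΔ 0) hball
      linarith
  have hdualsubP : polarDualV (∑ i, Nhat i)
      ⊆ convexHull ℝ (⋃ i : Fin (k+1), (fun x => ((x, evec i) : Vdk d k)) '' Δ i) := by
    intro y hy
    by_contra hyP
    obtain ⟨f, u, hfu, hufy⟩ :=
      geometric_hahn_banach_closed_point (convex_convexHull ℝ _) hPclosed hyP
    have key : ∀ zz : Vdk d k, f zz = pairingV zz
        (((fun j => f ((Pi.single j 1, 0) : Vdk d k)),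
          fun j => f (((0 : Fin d → ℝ), Pi.single j 1) : Vdk d k)) : Vdk d k) := by
      intro zz
      have h1 : ((zz.1, (0 : Fin k → ℝ)) : Vdk d k)
          = ∑ j, zz.1 j • ((Pi.single j 1, 0) : Vdk d k) := by
        refine Prod.ext ?_ ?_
        · rw [Prod.fst_sum]
          funext l
          rw [Finset.sum_apply]
          simp [Pi.single_apply, mul_ite, Finset.sum_ite_eq]
        · rw [Prod.snd_sum]
          simp
      have h2 : (((0 : Fin d → ℝ), zz.2) : Vdk d k)
          = ∑ j, zz.2 j • (((0:Fin d → ℝ), Pi.single j 1) : Vdk d k) := by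
        refine Prod.ext ?_ ?_
        · rw [Prod.fst_sum]; simp
        · rw [Prod.snd_sum]
          funext l
          rw [Finset.sum_apply]
          simp [Pi.single_apply, mul_ite, Finset.sum_ite_eq]
      have h3 : zz = ((zz.1, (0 : Fin k → ℝ)) : Vdk d k)
          + (((0 : Fin d → ℝ), zz.2) : Vdk d k) := by
        refine Prod.ext ?_ ?_ <;> simp
      calc f zz = f (((zz.1, (0 : Fin k → ℝ)) : Vdk d k)
            + (((0 : Fin d → ℝ), zz.2) : Vdk d k)) := by rw [← h3]
        _ = f ((zz.1, (0 : Fin k → ℝ)) : Vdk d k) + f (((0 : Fin d → ℝ), zz.2) : Vdk d k) :=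
            map_add f _ _
        _ = (∑ j, zz.1 j * f ((Pi.single j 1, 0) : Vdk d k))
            + ∑ j, zz.2 j * f (((0:Fin d → ℝ), Pi.single j 1) : Vdk d k) := by
            rw [h1, h2, map_sum, map_sum]
            simp only [map_smul, smul_eq_mul]
        _ = _ := by simp [pairingV, pairing]
    have hu0 : 0 < u := by
      have h4 := hfu 0 h0P
      rw [map_zero] at h4
      exact h4
    set W : Vdk d k := (((fun j => f ((Pi.single j 1, 0) : Vdk d k)),
      fun j => f (((0 : Fin d → ℝ), Pi.single j 1) : Vdk d k)) : Vdk d k) with hW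
    have hzP : ((-u⁻¹) • W) ∈ polarDualV (convexHull ℝ
        (⋃ i : Fin (k+1), (fun x => ((x, evec i) : Vdk d k)) '' Δ i)) := by
      intro p hp
      rw [pairingV_smul_right, ← key p]
      have h5 := mul_le_mul_of_nonneg_left (le_of_lt (hfu p hp)) (inv_nonneg.2 hu0.le)
      rw [inv_mul_cancel₀ (ne_of_gt hu0)] at h5
      have h6 : -u⁻¹ * f p = -(u⁻¹ * f p) := by ring
      rw [h6]
      linarith
    have hzT := hlemB _ hzP
    have h7 := hy _ (by rw [hT, hQS']; exact hzT)
    rw [pairingV_smul_left, pairingV_comm W y, ← key y] at h7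
    have h8 := mul_lt_mul_of_pos_left hufy (inv_pos.2 hu0)
    rw [inv_mul_cancel₀ (ne_of_gt hu0)] at h8
    have h9 : -u⁻¹ * f y = -(u⁻¹ * f y) := by ring
    rw [h9] at h7
    linarith
  have hdualeq : polarDualV (∑ i, Nhat i)
      = convexHull ℝ (⋃ i : Fin (k+1), (fun x => ((x, evec i) : Vdk d k)) '' Δ i) :=
    Set.Subset.antisymm hdualsubP hPsubdual
  refine ⟨?_, ⟨hTlat, hinterior, ?_⟩, hdualeq⟩
  · rw [hT, Set.add_singleton]
  · rw [hdualeq, hPKS]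
    exact ⟨_, hPfin, hPlat, rfl⟩
end
end

section
/- Let Δ = Δ_0 + Δ_1 + ⋯ + Δ_k be a Minkowski sum decomposition of a reflexive polytope Δ ⊂ ℝ^d into lattice polytopes. Define Δ̂_0 = Conv(Δ_0, Δ_1 + e_1, …, Δ_k + e_k), Δ̂_i = Δ̂_0 − e_i for i = 1,…,k, and Δ̃_i = Conv((Δ_i + e_i) ∪ {0}) for i = 0,…,k, all in ℝ^d ⊕ ℝ^k, where e_0 = −(e_1+⋯+e_k). Then the linear map φ : ℝ^d ⊕ ℝ^k → ℝ^d ⊕ ℝ^k defined by φ(m + Σ_{i=1}^k α_i e_i) = (k+1)m + Σ_{i=1}^k α_i ((k+1)e_i + e_0) for m ∈ ℝ^d (which maps ℤ^d ⊕ ℤ^k into itself) maps Δ̃_0 ⊎ Δ̃_1 ⊎ ⋯ ⊎ Δ̃_k bijectively onto Δ̂_0 + Δ̂_1 + ⋯ + Δ̂_k. -/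
open scoped Pointwise
open Set

noncomputable section

/-- The linear map `φ(m + Σᵢ₌₁ᵏ αᵢeᵢ) = (k+1)m + Σᵢ₌₁ᵏ αᵢ((k+1)eᵢ + e₀)`. -/
def phi {d k : ℕ} : Vdk d k → Vdk d k :=
  fun p => (((k : ℝ) + 1) • p.1, fun j => ((k : ℝ) + 1) * p.2 j - ∑ i, p.2 i)

lemma sum_smul_evec {k : ℕ} (u : Fin (k+1) → ℝ) (j : Fin k) :
    (∑ i, u i • evec i) j = u j.succ - u 0 := by
  rw [Fin.sum_univ_succ]
  simp only [Pi.add_apply, Pi.smul_apply, evec, Fin.cases_zero, Fin.cases_succ, smul_eq_mul,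
    Pi.single_apply, mul_ite, mul_one, mul_zero, Finset.sum_apply]
  rw [Finset.sum_ite_eq Finset.univ j (fun i => u i.succ)]
  simp; ring

lemma sum_smul_evec' {k : ℕ} (v : Fin (k+1) → ℝ) (j : Fin k) :
    (∑ i, v i • (Fin.cases 0 (fun i' => Pi.single i' (1:ℝ)) i : Fin k → ℝ)) j = v j.succ := by
  rw [Fin.sum_univ_succ]
  simp only [Pi.add_apply, Pi.smul_apply, Fin.cases_zero, Fin.cases_succ, smul_eq_mul,
    Pi.single_apply, mul_ite, mul_one, mul_zero, Pi.zero_apply, Finset.sum_apply]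
  rw [Finset.sum_ite_eq Finset.univ j (fun i => v i.succ)]
  simp

lemma convex_combSet {d k : ℕ} (Δ : Fin (k+1) → Set (Fin d → ℝ))
    (hconv : ∀ i, Convex ℝ (Δ i))
    (C : Set (Fin (k+1) → ℝ)) (hC : Convex ℝ C) (hC0 : ∀ u ∈ C, ∀ i, 0 ≤ u i)
    (L : (Fin (k+1) → ℝ) → (Fin k → ℝ)) (hL : IsLinearMap ℝ L) :
    Convex ℝ {x : Vdk d k | ∃ (u : Fin (k+1) → ℝ) (p : Fin (k+1) → Fin d → ℝ), u ∈ C ∧ (∀ i, p i ∈ Δ i) ∧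
      x = (∑ i, u i • p i, L u)} := by
  rintro x ⟨u, p, hu, hp, rfl⟩ y ⟨v, q, hv, hq, rfl⟩ a b ha hb hab
  set w : Fin (k+1) → ℝ := a • u + b • v with hw
  have hwmem : w ∈ C := hC hu hv ha hb hab
  have hw0 : ∀ i, 0 ≤ w i := hC0 w hwmem
  have key : ∀ i, ∃ r ∈ Δ i, w i • r = (a * u i) • p i + (b * v i) • q i := by
    intro i
    have hau : 0 ≤ a * u i := mul_nonneg ha (hC0 u hu i)
    have hbv : 0 ≤ b * v i := mul_nonneg hb (hC0 v hv i)
    have hwi : w i = a * u i + b * v i := by simp [hw, smul_eq_mul]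
    rcases eq_or_lt_of_le (hw0 i) with h0 | hpos
    · refine ⟨p i, hp i, ?_⟩
      have h1 : a * u i = 0 := by nlinarith [hwi]
      have h2 : b * v i = 0 := by nlinarith [hwi]
      rw [← h0, h1, h2]; simp
    · refine ⟨(w i)⁻¹ • ((a * u i) • p i + (b * v i) • q i), ?_, ?_⟩
      · have := hconv i (hp i) (hq i)
          (mul_nonneg (inv_nonneg.2 (le_of_lt hpos)) hau)
          (mul_nonneg (inv_nonneg.2 (le_of_lt hpos)) hbv)
          (by field_simp; linarith [hwi])
        convert this using 1
        simp [smul_add, smul_smul]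
      · rw [smul_smul, mul_inv_cancel₀ (ne_of_gt hpos), one_smul]
  choose r hr hre using key
  refine ⟨w, r, hwmem, hr, ?_⟩
  have h1 : a • (∑ i, u i • p i) + b • (∑ i, v i • q i) = ∑ i, w i • r i := by
    rw [Finset.smul_sum, Finset.smul_sum, ← Finset.sum_add_distrib]
    refine Finset.sum_congr rfl fun i _ => ?_
    rw [hre i, smul_smul, smul_smul]
  have h2 : a • L u + b • L v = L w := by
    rw [hw, hL.map_add, hL.map_smul, hL.map_smul]
  show (a • (∑ i, u i • p i, L u).1 + b • (∑ i, v i • q i, L v).1,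
    a • (∑ i, u i • p i, L u).2 + b • (∑ i, v i • q i, L v).2) = _
  simp only
  rw [h1, h2]

lemma single_sum_smul {d k : ℕ} (i : Fin (k+1)) (p : Fin (k+1) → Fin d → ℝ) :
    ∑ l, (Pi.single i 1 : Fin (k+1) → ℝ) l • p l = p i := by
  rw [Finset.sum_eq_single i]
  · simp
  · intro b _ hb
    rw [Pi.single_apply]
    simp [hb]
  · simp

lemma single_L1 {k : ℕ} (i : Fin (k+1)) :
    (fun j : Fin k => (Pi.single i 1 : Fin (k+1) → ℝ) j.succ - (Pi.single i 1 : Fin (k+1) → ℝ) 0) = evec i := by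
  induction i using Fin.cases with
  | zero => funext j; simp [evec, Pi.single_apply, Fin.succ_ne_zero]
  | succ t =>
      funext j
      simp [evec, Pi.single_apply, Fin.succ_inj, (Fin.succ_ne_zero t).symm]

lemma single_L2 {k : ℕ} (i : Fin (k+1)) :
    (fun j : Fin k => (Pi.single i 1 : Fin (k+1) → ℝ) j.succ)
      = (Fin.cases 0 (fun t => Pi.single t 1) i : Fin k → ℝ) := by
  induction i using Fin.cases with
  | zero => funext j; simp [Pi.single_apply, Fin.succ_ne_zero]
  | succ t =>
      funext j
      simp [Pi.single_apply, Fin.succ_inj]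

lemma src_eq {d k : ℕ} (Δ : Fin (k+1) → Set (Fin d → ℝ)) (hconv : ∀ i, Convex ℝ (Δ i))
    (w : Fin (k+1) → Fin d → ℝ) (hw : ∀ i, w i ∈ Δ i) :
    convexHull ℝ (⋃ i, convexHull ℝ ((fun x => ((x, evec i) : Vdk d k)) '' Δ i ∪ {0})) =
    {x : Vdk d k | ∃ (u : Fin (k+1) → ℝ) (p : Fin (k+1) → Fin d → ℝ),
      ((∀ i, 0 ≤ u i) ∧ ∑ i, u i ≤ 1) ∧ (∀ i, p i ∈ Δ i) ∧
      x = (∑ i, u i • p i, fun j => u j.succ - u 0)} := by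
  have hCconv : Convex ℝ {u : Fin (k+1) → ℝ | (∀ i, 0 ≤ u i) ∧ ∑ i, u i ≤ 1} := by
    rintro u ⟨hu0, huS⟩ v ⟨hv0, hvS⟩ a b ha hb hab
    constructor
    · intro i
      exact add_nonneg (mul_nonneg ha (hu0 i)) (mul_nonneg hb (hv0 i))
    · have : ∑ i, (a • u + b • v) i = a * ∑ i, u i + b * ∑ i, v i := by
        simp [Finset.sum_add_distrib, Finset.mul_sum]
      rw [this]
      nlinarith
  have hT : Convex ℝ {x : Vdk d k | ∃ (u : Fin (k+1) → ℝ) (p : Fin (k+1) → Fin d → ℝ),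
      ((∀ i, 0 ≤ u i) ∧ ∑ i, u i ≤ 1) ∧ (∀ i, p i ∈ Δ i) ∧
      x = (∑ i, u i • p i, fun j => u j.succ - u 0)} := by
    have := convex_combSet Δ hconv _ hCconv (fun u hu => hu.1)
      (fun u => fun j => u j.succ - u 0)
      (by constructor <;> intros <;> funext j <;> simp [mul_sub] <;> ring)
    exact this
  apply Subset.antisymm
  · apply convexHull_min _ hT
    apply iUnion_subset
    intro i
    apply convexHull_min _ hT
    rintro x (⟨y, hy, rfl⟩ | hx)
    · refine ⟨Pi.single i 1, Function.update w i y, ⟨?_, ?_⟩, ?_, ?_⟩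
      · intro l; rw [Pi.single_apply]; positivity
      · rw [Finset.sum_eq_single i] <;> simp +contextual [Pi.single_apply]
      · intro l
        rcases eq_or_ne l i with rfl | hl
        · simpa using hy
        · rw [Function.update_of_ne hl]; exact hw l
      · rw [single_sum_smul, Function.update_self, single_L1]
    · rcases hx with rfl
      refine ⟨0, w, ⟨fun _ => le_rfl, by simp⟩, hw, ?_⟩
      refine Prod.ext (by simp) ?_
      funext j; simp
  · rintro x ⟨u, p, ⟨hu0, huS⟩, hp, rfl⟩
    have hmem := (convex_convexHull ℝ
        (⋃ i, convexHull ℝ ((fun x => ((x, evec i) : Vdk d k)) '' Δ i ∪ {0}))).sum_mem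
      (t := (Finset.univ : Finset (Option (Fin (k+1)))))
      (w := fun o => o.elim (1 - ∑ i, u i) u)
      (z := fun o => o.elim 0 (fun i => ((p i, evec i) : Vdk d k)))
      (fun o _ => by
        cases o with
        | none => simpa using huS
        | some i => simpa using hu0 i)
      (by rw [Fintype.sum_option]; simp)
      (fun o _ => by
        cases o with
        | none =>
            simp only [Option.elim]
            exact subset_convexHull ℝ _ (mem_iUnion.2 ⟨0, subset_convexHull ℝ _
              (mem_union_right _ rfl)⟩)
        | some i =>
            simp only [Option.elim]
            exact subset_convexHull ℝ _ (mem_iUnion.2 ⟨i, subset_convexHull ℝ _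
              (mem_union_left _ ⟨p i, hp i, rfl⟩)⟩))
    convert hmem using 1
    rw [Fintype.sum_option]
    simp only [Option.elim, smul_zero, zero_add]
    refine Prod.ext ?_ ?_
    · rw [Prod.fst_sum]
      simp
    · rw [Prod.snd_sum]
      simp only
      funext j
      rw [Finset.sum_apply]
      have := sum_smul_evec u j
      rw [Finset.sum_apply] at this
      simp only [Pi.smul_apply] at this ⊢
      exact this.symm

lemma Q_eq {d k : ℕ} (Δ : Fin (k+1) → Set (Fin d → ℝ)) (hconv : ∀ i, Convex ℝ (Δ i))
    (w : Fin (k+1) → Fin d → ℝ) (hw : ∀ i, w i ∈ Δ i) :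
    convexHull ℝ ((fun x => ((x, 0) : Vdk d k)) '' Δ 0 ∪
        ⋃ i : Fin k, (fun x => ((x, Pi.single i 1) : Vdk d k)) '' Δ i.succ) =
    {x : Vdk d k | ∃ (u : Fin (k+1) → ℝ) (p : Fin (k+1) → Fin d → ℝ),
      ((∀ i, 0 ≤ u i) ∧ ∑ i, u i = 1) ∧ (∀ i, p i ∈ Δ i) ∧
      x = (∑ i, u i • p i, fun j => u j.succ)} := by
  have hCconv : Convex ℝ {u : Fin (k+1) → ℝ | (∀ i, 0 ≤ u i) ∧ ∑ i, u i = 1} := by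
    rintro u ⟨hu0, huS⟩ v ⟨hv0, hvS⟩ a b ha hb hab
    constructor
    · intro i
      exact add_nonneg (mul_nonneg ha (hu0 i)) (mul_nonneg hb (hv0 i))
    · have : ∑ i, (a • u + b • v) i = a * ∑ i, u i + b * ∑ i, v i := by
        simp [Finset.sum_add_distrib, Finset.mul_sum]
      rw [this, huS, hvS]; linarith
  have hT : Convex ℝ {x : Vdk d k | ∃ (u : Fin (k+1) → ℝ) (p : Fin (k+1) → Fin d → ℝ),
      ((∀ i, 0 ≤ u i) ∧ ∑ i, u i = 1) ∧ (∀ i, p i ∈ Δ i) ∧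
      x = (∑ i, u i • p i, fun j => u j.succ)} := by
    have := convex_combSet Δ hconv _ hCconv (fun u hu => hu.1)
      (fun u => fun j => u j.succ)
      (by constructor <;> intros <;> funext j <;> simp)
    exact this
  apply Subset.antisymm
  · apply convexHull_min _ hT
    rintro x (⟨y, hy, rfl⟩ | hx)
    · refine ⟨Pi.single 0 1, Function.update w 0 y, ⟨?_, by simp⟩, ?_, ?_⟩
      · intro l; rw [Pi.single_apply]; positivity
      · intro l
        rcases eq_or_ne l 0 with rfl | hl
        · simpa using hy
        · rw [Function.update_of_ne hl]; exact hw l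
      · rw [single_sum_smul, Function.update_self]
        refine Prod.ext rfl ?_
        rw [single_L2 (0 : Fin (k+1))]
        simp
    · obtain ⟨t, y, hy, rfl⟩ := mem_iUnion.1 hx
      refine ⟨Pi.single t.succ 1, Function.update w t.succ y, ⟨?_, by simp⟩, ?_, ?_⟩
      · intro l; rw [Pi.single_apply]; positivity
      · intro l
        rcases eq_or_ne l t.succ with rfl | hl
        · simpa using hy
        · rw [Function.update_of_ne hl]; exact hw l
      · rw [single_sum_smul, Function.update_self]
        refine Prod.ext rfl ?_
        rw [single_L2 (t.succ : Fin (k+1))]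
        simp
  · rintro x ⟨u, p, ⟨hu0, huS⟩, hp, rfl⟩
    have hmem := (convex_convexHull ℝ ((fun x => ((x, 0) : Vdk d k)) '' Δ 0 ∪
        ⋃ i : Fin k, (fun x => ((x, Pi.single i 1) : Vdk d k)) '' Δ i.succ)).sum_mem
      (t := (Finset.univ : Finset (Fin (k+1))))
      (w := u)
      (z := fun i => ((p i, Fin.cases 0 (fun t => Pi.single t 1) i) : Vdk d k))
      (fun i _ => hu0 i) huS
      (fun i _ => by
        refine subset_convexHull ℝ _ ?_
        induction i using Fin.cases with
        | zero => exact mem_union_left _ ⟨p 0, hp 0, by simp⟩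
        | succ t => exact mem_union_right _ (mem_iUnion.2 ⟨t, p t.succ, hp t.succ, by simp⟩)
      )
    convert hmem using 1
    refine Prod.ext ?_ ?_
    · rw [Prod.fst_sum]
      simp
    · rw [Prod.snd_sum]
      simp only
      funext j
      rw [Finset.sum_apply]
      have := sum_smul_evec' u j
      rw [Finset.sum_apply] at this
      simp only [Pi.smul_apply] at this ⊢
      exact this.symm

lemma target_eq {d k : ℕ} (Δ : Fin (k+1) → Set (Fin d → ℝ)) (Q : Set (Vdk d k))
    (hQconv : Convex ℝ Q)
    (hQ' : Q = {x : Vdk d k | ∃ (u : Fin (k+1) → ℝ) (p : Fin (k+1) → Fin d → ℝ),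
      ((∀ i, 0 ≤ u i) ∧ ∑ i, u i = 1) ∧ (∀ i, p i ∈ Δ i) ∧
      x = (∑ i, u i • p i, fun j => u j.succ)})
    (Δhat : Fin (k+1) → Set (Vdk d k))
    (hΔhat : Δhat = Fin.cases Q
        (fun i => (fun y => y - (((0 : Fin d → ℝ), Pi.single i 1) : Vdk d k)) '' Q)) :
    (∑ i, Δhat i) = {y : Vdk d k | ∃ (u : Fin (k+1) → ℝ) (p : Fin (k+1) → Fin d → ℝ),
      ((∀ i, 0 ≤ u i) ∧ ∑ i, u i = 1) ∧ (∀ i, p i ∈ Δ i) ∧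
      y = (((k : ℝ)+1) • ∑ i, u i • p i, fun j => ((k : ℝ)+1) * u j.succ - 1)} := by
  have hk1 : ((k : ℝ) + 1) ≠ 0 := by positivity
  have hones : (∑ j : Fin k, (((0 : Fin d → ℝ), Pi.single j 1) : Vdk d k))
      = ((0 : Fin d → ℝ), fun _ => (1:ℝ)) := by
    refine Prod.ext ?_ ?_
    · rw [Prod.fst_sum]; simp
    · rw [Prod.snd_sum]
      simp only
      exact Finset.univ_sum_single (fun _ => (1:ℝ))
  ext y
  constructor
  · intro hy
    obtain ⟨g, hg, hsum⟩ := (Set.mem_fintype_sum _ _).1 hy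
    have hg0 : g 0 ∈ Q := by
      have := hg 0
      simp only [hΔhat, Fin.cases_zero] at this
      exact this
    have hsucc : ∀ j : Fin k, ∃ q ∈ Q, g j.succ = q - ((0 : Fin d → ℝ), Pi.single j 1) := by
      intro j
      have := hg j.succ
      simp only [hΔhat, Fin.cases_succ] at this
      obtain ⟨q, hq, hqe⟩ := this
      exact ⟨q, hq, hqe.symm⟩
    choose qf hqf hgq using hsucc
    set m : Vdk d k := ((k : ℝ)+1)⁻¹ • (g 0 + ∑ j, qf j) with hm
    have hmQ : m ∈ Q := by
      have := hQconv.sum_mem (t := (Finset.univ : Finset (Fin (k+1))))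
        (w := fun _ => ((k : ℝ)+1)⁻¹)
        (z := Fin.cases (g 0) qf)
        (fun i _ => by positivity)
        (by simp [Finset.sum_const, Finset.card_univ]; field_simp)
        (fun i _ => by
          induction i using Fin.cases with
          | zero => simpa using hg0
          | succ t => simpa using hqf t)
      convert this using 1
      rw [Fin.sum_univ_succ]
      simp only [Fin.cases_zero, Fin.cases_succ]
      rw [hm, smul_add, Finset.smul_sum]
    have hym : y = ((k : ℝ)+1) • m - ((0 : Fin d → ℝ), fun _ => (1:ℝ)) := by
      rw [hm, smul_smul, mul_inv_cancel₀ hk1, one_smul, ← hones, ← hsum,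
        Fin.sum_univ_succ]
      rw [Finset.sum_congr rfl (fun j (_ : j ∈ Finset.univ) => hgq j)]
      rw [Finset.sum_sub_distrib]
      abel
    rw [hQ'] at hmQ
    obtain ⟨u, p, hu, hp, hmrep⟩ := hmQ
    refine ⟨u, p, hu, hp, ?_⟩
    rw [hym, hmrep]
    refine Prod.ext ?_ ?_
    · simp
    · funext j
      simp [Prod.smul_snd]
  · rintro ⟨u, p, ⟨hu0, huS⟩, hp, rfl⟩
    have hm' : ((∑ i, u i • p i, fun j => u j.succ) : Vdk d k) ∈ Q := by
      rw [hQ']; exact ⟨u, p, ⟨hu0, huS⟩, hp, rfl⟩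
    set m' : Vdk d k := (∑ i, u i • p i, fun j => u j.succ) with hmdef
    apply (Set.mem_fintype_sum _ _).2
    refine ⟨Fin.cases m' (fun j => m' - ((0 : Fin d → ℝ), Pi.single j 1)), ?_, ?_⟩
    · intro i
      induction i using Fin.cases with
      | zero =>
          simp only [hΔhat, Fin.cases_zero]
          exact hm'
      | succ t =>
          simp only [hΔhat, Fin.cases_succ]
          exact ⟨m', hm', rfl⟩
    · rw [Fin.sum_univ_succ]
      simp only [Fin.cases_zero, Fin.cases_succ]
      rw [Finset.sum_sub_distrib, Finset.sum_const, Finset.card_univ, hones]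
      have hksmul : (Fintype.card (Fin k)) • m' = (k : ℝ) • m' := by
        rw [Fintype.card_fin, Nat.cast_smul_eq_nsmul]
      rw [hksmul]
      have : m' + ((k : ℝ) • m' - ((0 : Fin d → ℝ), fun _ => (1:ℝ)))
          = ((k : ℝ) + 1) • m' - ((0 : Fin d → ℝ), fun _ => (1:ℝ)) := by
        rw [add_smul, one_smul]; abel
      rw [this]
      refine Prod.ext ?_ ?_
      · simp [hmdef]
      · funext j
        simp [Prod.smul_snd, hmdef]


/-- `φ` maps the lattice `ℤ^d ⊕ ℤ^k` into itself and maps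
`Δ̃₀ ⊎ Δ̃₁ ⊎ ⋯ ⊎ Δ̃_k` bijectively onto `Δ̂₀ + Δ̂₁ + ⋯ + Δ̂_k`. -/
theorem phi_maps_tilde_to_hat {d k : ℕ}
    (Δ : Fin (k+1) → Set (Fin d → ℝ))
    (hlat : ∀ i, IsLatticePolytope (Δ i))
    (hrefl : IsReflexive (∑ i, Δ i))
    -- Δ̂₀ = Conv(Δ₀, Δ₁ + e₁, …, Δ_k + e_k)
    (Q : Set (Vdk d k))
    (hQ : Q = convexHull ℝ ((fun x => ((x, 0) : Vdk d k)) '' Δ 0 ∪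
        ⋃ i : Fin k, (fun x => ((x, Pi.single i 1) : Vdk d k)) '' Δ i.succ))
    -- Δ̂ᵢ = Δ̂₀ − eᵢ for i = 1, …, k
    (Δhat : Fin (k+1) → Set (Vdk d k))
    (hΔhat : Δhat = Fin.cases Q
        (fun i => (fun y => y - (((0 : Fin d → ℝ), Pi.single i 1) : Vdk d k)) '' Q))
    -- Δ̃ᵢ = Conv((Δᵢ + eᵢ) ∪ {0}) for i = 0, …, k
    (Δtilde : Fin (k+1) → Set (Vdk d k))
    (hΔtilde : Δtilde = fun i =>
        convexHull ℝ ((fun x => ((x, evec i) : Vdk d k)) '' Δ i ∪ {0})) :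
    -- φ maps ℤ^d ⊕ ℤ^k into itself
    (∀ x : Vdk d k, IsLatticePtV x → IsLatticePtV (phi x)) ∧
    -- φ maps Δ̃₀ ⊎ ⋯ ⊎ Δ̃_k bijectively onto Δ̂₀ + ⋯ + Δ̂_k
    Set.BijOn (phi (d := d) (k := k)) (convexHull ℝ (⋃ i, Δtilde i)) (∑ i, Δhat i) := by
  have hk1 : ((k : ℝ) + 1) ≠ 0 := by positivity
  constructor
  · rintro x ⟨h1, h2⟩
    choose z1 hz1 using h1
    choose z2 hz2 using h2
    constructor
    · intro i
      refine ⟨(k+1) * z1 i, ?_⟩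
      show ((k : ℝ) + 1) * x.1 i = _
      rw [hz1 i]; push_cast; ring
    · intro j
      refine ⟨(k+1) * z2 j - ∑ i, z2 i, ?_⟩
      show ((k : ℝ) + 1) * x.2 j - ∑ i, x.2 i = _
      simp only [hz2]
      push_cast; ring
  · have h0Δ : (0 : Fin d → ℝ) ∈ ∑ i, Δ i := interior_subset hrefl.2.1
    obtain ⟨z, hz, hzsum⟩ := (Set.mem_fintype_sum _ _).1 h0Δ
    have hz' : ∀ i, z i ∈ Δ i := hz
    have hconv : ∀ i, Convex ℝ (Δ i) := fun i => by
      obtain ⟨S, _, _, hS⟩ := hlat i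
      rw [hS]; exact convex_convexHull ℝ S
    have hQconv : Convex ℝ Q := by rw [hQ]; exact convex_convexHull ℝ _
    have hQ' := hQ.trans (Q_eq Δ hconv z hz')
    rw [hΔtilde, src_eq Δ hconv z hz', target_eq Δ Q hQconv hQ' Δhat hΔhat]
    refine ⟨?_, ?_, ?_⟩
    · -- MapsTo
      rintro x ⟨u, p, ⟨hu0, huS⟩, hp, rfl⟩
      set c : ℝ := (1 - ∑ i, u i) / ((k : ℝ)+1) with hc
      have hc0 : 0 ≤ c := div_nonneg (by linarith) (by positivity)
      have hkc : ((k : ℝ)+1) * c = 1 - ∑ i, u i := by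
        rw [hc]; field_simp
      set v : Fin (k+1) → ℝ := fun i => u i + c with hvdef
      have hv0 : ∀ i, 0 ≤ v i := fun i => add_nonneg (hu0 i) hc0
      have hvS : ∑ i, v i = 1 := by
        rw [hvdef]
        rw [Finset.sum_add_distrib, Finset.sum_const, Finset.card_univ, Fintype.card_fin,
          nsmul_eq_mul]
        push_cast
        linarith [hkc]
      have key : ∀ i, ∃ r ∈ Δ i, v i • r = u i • p i + c • z i := by
        intro i
        rcases eq_or_lt_of_le (hv0 i) with h0 | hpos
        · have hv0i : v i = 0 := h0.symm
          have hvi : u i + c = 0 := hv0i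
          have hui : u i = 0 := by linarith [hu0 i, hc0]
          have hci : c = 0 := by linarith [hu0 i, hc0]
          refine ⟨p i, hp i, ?_⟩
          rw [hv0i, hui, hci]; simp
        · refine ⟨(v i)⁻¹ • (u i • p i + c • z i), ?_, ?_⟩
          · have hvi : v i = u i + c := rfl
            have hcoef : (v i)⁻¹ * u i + (v i)⁻¹ * c = 1 := by
              rw [← mul_add, ← hvi, inv_mul_cancel₀ (ne_of_gt hpos)]
            have := hconv i (hp i) (hz' i)
              (mul_nonneg (inv_nonneg.2 hpos.le) (hu0 i))
              (mul_nonneg (inv_nonneg.2 hpos.le) hc0) hcoef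
            convert this using 1
            simp [smul_add, smul_smul]
          · rw [smul_smul, mul_inv_cancel₀ (ne_of_gt hpos), one_smul]
      choose q hq hqe using key
      refine ⟨v, q, ⟨hv0, hvS⟩, hq, ?_⟩
      have hsumeq : ∑ i, v i • q i = ∑ i, u i • p i := by
        rw [Finset.sum_congr rfl (fun i _ => hqe i), Finset.sum_add_distrib,
          ← Finset.smul_sum, hzsum, smul_zero, add_zero]
      refine Prod.ext ?_ ?_
      · show ((k : ℝ) + 1) • (∑ i, u i • p i) = ((k : ℝ) + 1) • ∑ i, v i • q i
        rw [hsumeq]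
      · funext j
        show ((k : ℝ) + 1) * (u j.succ - u 0) - ∑ j' : Fin k, (u j'.succ - u 0)
            = ((k : ℝ) + 1) * v j.succ - 1
        have h1 : ∑ j' : Fin k, u j'.succ = (∑ i, u i) - u 0 := by
          rw [Fin.sum_univ_succ]; ring
        rw [Finset.sum_sub_distrib, h1, Finset.sum_const, Finset.card_univ, Fintype.card_fin,
          nsmul_eq_mul]
        have hvj : v j.succ = u j.succ + c := rfl
        rw [hvj]
        linarith [hkc]
    · -- InjOn
      intro a _ b _ hab
      have h1 : a.1 = b.1 := by
        have := congrArg Prod.fst hab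
        simp only [phi] at this
        exact smul_right_injective (Fin d → ℝ) hk1 this
      have hsnd := congrArg Prod.snd hab
      simp only [phi] at hsnd
      have hsum : ∑ i, a.2 i = ∑ i, b.2 i := by
        have hs := congrArg (fun f => ∑ j : Fin k, f j) hsnd
        simp only [Finset.sum_sub_distrib, ← Finset.mul_sum, Finset.sum_const,
          Finset.card_univ, Fintype.card_fin, nsmul_eq_mul] at hs
        nlinarith [hs]
      have h2 : a.2 = b.2 := by
        funext j
        have := congrFun hsnd j
        have hmul : ((k : ℝ) + 1) * a.2 j = ((k : ℝ) + 1) * b.2 j := by linarith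
        exact mul_left_cancel₀ hk1 hmul
      exact Prod.ext h1 h2
    · -- SurjOn
      rintro y ⟨v, q, ⟨hv0, hvS⟩, hq, rfl⟩
      refine ⟨((∑ i, v i • q i, fun j => v j.succ - v 0) : Vdk d k),
        ⟨v, q, ⟨hv0, hvS.le⟩, hq, rfl⟩, ?_⟩
      refine Prod.ext rfl ?_
      funext j
      show ((k : ℝ) + 1) * (v j.succ - v 0) - ∑ j' : Fin k, (v j'.succ - v 0)
          = ((k : ℝ) + 1) * v j.succ - 1
      have h1 : ∑ j' : Fin k, v j'.succ = (∑ i, v i) - v 0 := by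
        rw [Fin.sum_univ_succ]; ring
      rw [Finset.sum_sub_distrib, h1, hvS, Finset.sum_const, Finset.card_univ, Fintype.card_fin,
        nsmul_eq_mul]
      ring
end
end
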